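/- arXiv:1902.10433 — 6 statements merged into one kernel-verified Lean document; each statement's English description precedes it below -/
import Mathlib

section
/- Let X be a countable set, p a probability mass function on X, η > 0, and l : X → ℝ with l(x) ∈ [0, C] for all x. Define a(x) = exp(-η·l(x)) and q(x) = p(x)·a(x) / Σ_{x'} p(x')·a(x'). Then Σ_{x : p(x) ≥ q(x)} (p(x) - q(x)) ≤ η·C/4. -/
lemma aux_tanh_le (u : ℝ) (hu : 0 ≤ u) :
    1 - Real.exp (-2 * u) ≤ u * (1 + Real.exp (-2 * u)) := by
  set f : ℝ → ℝ := fun x => x * (1 + Real.exp (-2 * x)) - (1 - Real.exp (-2 * x)) with hf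
  have hd : ∀ x : ℝ, HasDerivAt f (1 - (1 + 2 * x) * Real.exp (-2 * x)) x := by
    intro x
    have h1 : HasDerivAt (fun x : ℝ => -2 * x) (-2) x := by
      simpa using (hasDerivAt_id x).const_mul (-2 : ℝ)
    have h2 : HasDerivAt (fun x : ℝ => Real.exp (-2 * x)) (Real.exp (-2 * x) * (-2)) x := h1.exp
    have h3 : HasDerivAt (fun x : ℝ => 1 + Real.exp (-2 * x)) (Real.exp (-2 * x) * (-2)) x :=
      h2.const_add 1
    have h4 : HasDerivAt (fun x : ℝ => x * (1 + Real.exp (-2 * x)))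
        (1 * (1 + Real.exp (-2 * x)) + x * (Real.exp (-2 * x) * (-2))) x :=
      (hasDerivAt_id x).mul h3
    have h5 : HasDerivAt (fun x : ℝ => 1 - Real.exp (-2 * x)) (-(Real.exp (-2 * x) * (-2))) x :=
      h2.const_sub 1
    have h6 : HasDerivAt f _ x := h4.sub h5
    convert h6 using 1
    ring
  have hmono : Monotone f := by
    apply monotone_of_deriv_nonneg (fun x => (hd x).differentiableAt)
    intro x
    rw [(hd x).deriv]
    have h7 : (1 + 2 * x) * Real.exp (-2 * x) ≤ Real.exp (2 * x) * Real.exp (-2 * x) :=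
      mul_le_mul_of_nonneg_right (by linarith [Real.add_one_le_exp (2 * x)]) (Real.exp_pos _).le
    rw [← Real.exp_add, show (2:ℝ) * x + -2 * x = 0 by ring, Real.exp_zero] at h7
    linarith
  have h0 : f 0 = 0 := by simp [hf]
  have := hmono hu
  rw [h0] at this
  simp only [hf] at this
  linarith

/-- Lemma 1 of the paper: total-variation shift under exponential reweighing.
If `p` is a probability mass function on a countable set `X`, losses `l x ∈ [0, C]`,
`a x = exp (-η l x)` and `q` is the normalized tilt `p·a / Σ p·a`, then the one-sided
total variation `Σ_{x : p x ≥ q x} (p x - q x)` is at most `η C / 4`. -/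
theorem stmt_0 {X : Type*} [Countable X] [Nonempty X]
    (p q a l : X → ℝ) (η C : ℝ)
    (hη : 0 < η) (hC : 0 < C)
    (hp0 : ∀ x, 0 ≤ p x) (hps : Summable p) (hp1 : ∑' x, p x = 1)
    (hl : ∀ x, l x ∈ Set.Icc (0 : ℝ) C)
    (ha : ∀ x, a x = Real.exp (-η * l x))
    (hq : ∀ x, q x = p x * a x / ∑' x', p x' * a x') :
    ∑' x : {x : X // q x ≤ p x}, (p x.1 - q x.1) ≤ η * C / 4 := by
  set Z : ℝ := ∑' x', p x' * a x' with hZdef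
  set m : ℝ := Real.exp (-(η * C)) with hmdef
  have hm0 : 0 < m := Real.exp_pos _
  have hm1 : m < 1 := by
    rw [hmdef]
    exact Real.exp_lt_one_iff.2 (by nlinarith)
  have ha_pos : ∀ x, 0 < a x := fun x => (ha x) ▸ Real.exp_pos _
  have ha_le1 : ∀ x, a x ≤ 1 := by
    intro x
    rw [ha x]
    apply Real.exp_le_one_iff.2
    have := (hl x).1
    nlinarith
  have ham : ∀ x, m ≤ a x := by
    intro x
    rw [ha x, hmdef]
    apply Real.exp_le_exp.2
    have := (hl x).2
    nlinarith
  have hpa0 : ∀ x, 0 ≤ p x * a x := fun x => mul_nonneg (hp0 x) (ha_pos x).le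
  have hpa_s : Summable (fun x => p x * a x) :=
    Summable.of_nonneg_of_le hpa0 (fun x => mul_le_of_le_one_right (hp0 x) (ha_le1 x)) hps
  have hZ1 : Z ≤ 1 := by
    have h2 := Summable.tsum_le_tsum (fun x => mul_le_of_le_one_right (hp0 x) (ha_le1 x)) hpa_s hps
    rw [hp1] at h2
    exact h2
  have hmZ : m ≤ Z := by
    have h1 : ∑' x, p x * m = m := by rw [tsum_mul_right, hp1, one_mul]
    have h2 := Summable.tsum_le_tsum (fun x => mul_le_mul_of_nonneg_left (ham x) (hp0 x))
      (hps.mul_right m) hpa_s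
    rw [h1] at h2
    exact h2
  have hZ0 : 0 < Z := lt_of_lt_of_le hm0 hmZ
  -- the constant
  set c : ℝ := (Z - m) / ((1 - m) * Z) with hcdef
  have hmZpos : (0:ℝ) < (1 - m) * Z := mul_pos (by linarith) hZ0
  have hc0 : 0 ≤ c := div_nonneg (by linarith) hmZpos.le
  set g : X → ℝ := fun x => p x * (1 - a x) * c with hgdef
  have hg0 : ∀ x, 0 ≤ g x := by
    intro x
    exact mul_nonneg (mul_nonneg (hp0 x) (by linarith [ha_le1 x])) hc0
  have hgs : Summable g := ((hps.sub hpa_s).congr (fun x => by ring)).mul_right c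
  have hkey : ∀ x, p x - q x ≤ g x := by
    intro x
    rw [hq x]
    simp only [hgdef, hcdef]
    have e1 : p x - p x * a x / Z = p x * (Z - a x) / Z := by
      field_simp
    rw [e1, ← mul_div_assoc, div_le_div_iff₀ hZ0 hmZpos]
    nlinarith [mul_nonneg (mul_nonneg (mul_nonneg (hp0 x) hZ0.le)
      (sub_nonneg.2 (ham x))) (sub_nonneg.2 hZ1)]
  set s2 : Set X := {x | q x ≤ p x} with hs2def
  set f : X → ℝ := fun x => s2.indicator (fun x => p x - q x) x with hfdef
  have hf0 : ∀ x, 0 ≤ f x := by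
    intro x
    simp only [hfdef]
    by_cases hx : x ∈ s2
    · rw [Set.indicator_of_mem hx]
      exact sub_nonneg.2 hx
    · rw [Set.indicator_of_notMem hx]
  have hfg : ∀ x, f x ≤ g x := by
    intro x
    simp only [hfdef]
    by_cases hx : x ∈ s2
    · rw [Set.indicator_of_mem hx]
      exact hkey x
    · rw [Set.indicator_of_notMem hx]
      exact hg0 x
  have hfs : Summable f := Summable.of_nonneg_of_le hf0 hfg hgs
  have hS : ∑' x : {x : X // q x ≤ p x}, (p x.1 - q x.1) = ∑' x, f x :=
    tsum_subtype s2 (fun x => p x - q x)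
  rw [hS]
  have hsum_g : ∑' x, g x = (1 - Z) * c := by
    simp only [hgdef]
    rw [tsum_mul_right]
    congr 1
    have : (fun x => p x * (1 - a x)) = fun x => p x - p x * a x := by
      funext x; ring
    rw [this, Summable.tsum_sub hps hpa_s, hp1, ← hZdef]
  have hle1 : ∑' x, f x ≤ (1 - Z) * c := by
    rw [← hsum_g]
    exact Summable.tsum_le_tsum hfg hfs hgs
  -- now the scalar inequality
  set s : ℝ := Real.exp (-(η * C) / 2) with hsdef
  have hs0 : 0 < s := Real.exp_pos _
  have hss : s * s = m := by
    rw [hsdef, hmdef, ← Real.exp_add]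
    ring_nf
  have hstep1 : (1 - Z) * c ≤ (1 - s) / (1 + s) := by
    rw [hcdef, ← mul_div_assoc, div_le_div_iff₀ hmZpos (by positivity)]
    nlinarith [mul_nonneg (sq_nonneg (Z - s)) (by positivity : (0:ℝ) ≤ 1 + s),
      sq_nonneg (Z - s), hss]
  have hstep2 : (1 - s) / (1 + s) ≤ η * C / 4 := by
    rw [div_le_iff₀ (by positivity)]
    have hu : (0 : ℝ) ≤ η * C / 4 := by positivity
    have := aux_tanh_le (η * C / 4) hu
    have he : Real.exp (-2 * (η * C / 4)) = s := by
      rw [hsdef]; ring_nf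
    rw [he] at this
    linarith
  linarith
end

section
/- Let T be a positive integer and D : {1,…,T} → ℕ a sequence of delays with t + D(t) ≤ T for all t (so D(T) = 0). Define 𝒟_t = {τ : τ + D(τ) ≤ t}. Then Σ_{t=1}^{T-1} |𝒟_t| + Σ_{t=1}^{T-1} D(t) = T(T-1)/2. -/
/-- Lemma 2 of the paper: for delays `D t` with `t + D t ≤ T` (for `t = 1,…,T`) and
`𝒟_t = {τ ∈ {1,…,T} : τ + D τ ≤ t}`, one has
`Σ_{t=1}^{T-1} |𝒟_t| + Σ_{t=1}^{T-1} D t = T (T-1) / 2`. -/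
theorem stmt_3 (T : ℕ) (hT : 0 < T) (D : ℕ → ℕ)
    (hD : ∀ t ∈ Finset.Icc 1 T, t + D t ≤ T) :
    (∑ t ∈ Finset.Icc 1 (T - 1),
        ((Finset.Icc 1 T).filter (fun τ => τ + D τ ≤ t)).card)
      + ∑ t ∈ Finset.Icc 1 (T - 1), D t
      = T * (T - 1) / 2 := by
  have hDT : D T = 0 := by
    have := hD T (by simp only [Finset.mem_Icc]; omega)
    omega
  -- swap the double counting
  have h1 : (∑ t ∈ Finset.Icc 1 (T - 1),
      ((Finset.Icc 1 T).filter (fun τ => τ + D τ ≤ t)).card)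
      = ∑ τ ∈ Finset.Icc 1 T, (T - (τ + D τ)) := by
    have : ∀ t, ((Finset.Icc 1 T).filter (fun τ => τ + D τ ≤ t)).card
        = ∑ τ ∈ Finset.Icc 1 T, if τ + D τ ≤ t then 1 else 0 := by
      intro t
      rw [Finset.card_filter]
    simp_rw [this]
    rw [Finset.sum_comm]
    refine Finset.sum_congr rfl fun τ hτ => ?_
    rw [← Finset.card_filter]
    have : (Finset.Icc 1 (T - 1)).filter (fun t => τ + D τ ≤ t)
        = Finset.Icc (τ + D τ) (T - 1) := by
      ext x
      simp only [Finset.mem_filter, Finset.mem_Icc]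
      have := Finset.mem_Icc.mp hτ
      omega
    rw [this, Nat.card_Icc]
    omega
  rw [h1]
  -- peel off τ = T and combine with the delay sum
  have h2 : ∑ τ ∈ Finset.Icc 1 T, (T - (τ + D τ))
      = (∑ τ ∈ Finset.Icc 1 (T - 1), (T - (τ + D τ))) := by
    have : Finset.Icc 1 T = insert T (Finset.Icc 1 (T - 1)) := by
      ext x
      simp only [Finset.mem_insert, Finset.mem_Icc]
      omega
    rw [this, Finset.sum_insert (by simp only [Finset.mem_Icc]; omega), hDT]
    simp
  rw [h2, ← Finset.sum_add_distrib]
  have h3 : ∀ τ ∈ Finset.Icc 1 (T - 1), T - (τ + D τ) + D τ = T - τ := by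
    intro τ hτ
    have hτ' := Finset.mem_Icc.mp hτ
    have := hD τ (Finset.mem_Icc.mpr ⟨hτ'.1, by omega⟩)
    omega
  rw [Finset.sum_congr rfl h3]
  -- Gauss sum
  have h4 : ∑ τ ∈ Finset.Icc 1 (T - 1), (T - τ) = ∑ τ ∈ Finset.range T, τ := by
    have hsym : ∑ τ ∈ Finset.Icc 1 (T - 1), (T - τ) = ∑ τ ∈ Finset.Icc 1 (T - 1), τ := by
      refine Finset.sum_nbij' (fun i => T - i) (fun i => T - i) ?_ ?_ ?_ ?_ ?_
      all_goals intro a ha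
      all_goals simp only [Finset.mem_Icc] at *
      all_goals omega
    rw [hsym]
    have : Finset.range T = insert 0 (Finset.Icc 1 (T - 1)) := by
      ext x
      simp only [Finset.mem_insert, Finset.mem_Icc, Finset.mem_range]
      omega
    rw [this, Finset.sum_insert (by simp)]
    omega
  rw [h4, Finset.sum_range_id]
end

section
/- Let N, T ≥ 1 and let p be the Fixed Share distribution on sequences N_T = (n_1,…,n_T) ∈ {1,…,N}^T defined by p(n_1) = 1/N and p(n_t | n_{t-1}) = α_t/N + (1-α_t)·𝟙[n_t = n_{t-1}] with α_t = 1/t. Then for any sequence N_T with K = |{t ∈ {2,…,T} : n_t ≠ n_{t-1}}| switches, -ln p(N_T) ≤ (K+1)·(ln N + ln T). -/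
lemma telescope (T : ℕ) (hT : 1 ≤ T) :
    ∏ t ∈ Finset.Icc 2 T, (1 - 1 / (t : ℝ)) = 1 / T := by
  induction T with
  | zero => omega
  | succ T ih =>
    rcases Nat.eq_or_lt_of_le hT with h | h
    · simp [← h]
    · have hT1 : 1 ≤ T := by omega
      rw [Finset.prod_Icc_succ_top (by omega), ih hT1]
      have h0 : (T : ℝ) ≠ 0 := by positivity
      push_cast
      field_simp
      ring

/-- Lemma 3 of the paper: Fixed Share probability lower bound. With uniform prior
`1/N`, switch probabilities `α_t = 1/t`, the probability of any sequence
`(n_1, …, n_T)` with `K` switches satisfies `-ln p(N_T) ≤ (K+1)(ln N + ln T)`. -/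
theorem stmt_5 (N T : ℕ) (hN : 1 ≤ N) (hT : 1 ≤ T) (n : ℕ → Fin N)
    (P : ℝ)
    (hP : P = (1 / (N : ℝ)) *
        ∏ t ∈ Finset.Icc 2 T,
          ((1 / (t : ℝ)) * (1 / (N : ℝ))
            + (1 - 1 / (t : ℝ)) * (if n t = n (t - 1) then 1 else 0)))
    (K : ℕ)
    (hK : K = ((Finset.Icc 2 T).filter (fun t => n t ≠ n (t - 1))).card) :
    -Real.log P ≤ (K + 1 : ℝ) * (Real.log N + Real.log T) := by
  have hN0 : (0:ℝ) < N := by exact_mod_cast hN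
  have hT0 : (0:ℝ) < T := by exact_mod_cast hT
  set g : ℕ → ℝ := fun t =>
    if n t ≠ n (t - 1) then 1 / ((T:ℝ) * N) else (1 - 1 / (t:ℝ)) with hg
  -- each factor is ≥ g t
  have hfac : ∀ t ∈ Finset.Icc 2 T, g t ≤
      ((1 / (t : ℝ)) * (1 / (N : ℝ))
        + (1 - 1 / (t : ℝ)) * (if n t = n (t - 1) then 1 else 0)) := by
    intro t ht
    simp only [Finset.mem_Icc] at ht
    have ht0 : (0:ℝ) < t := by exact_mod_cast (by omega : 0 < t)
    have htT : (t:ℝ) ≤ T := by exact_mod_cast ht.2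
    have ht2 : (2:ℝ) ≤ t := by exact_mod_cast ht.1
    by_cases h : n t = n (t - 1)
    · have hgt : g t = 1 - 1 / (t:ℝ) := by simp [hg, h]
      rw [hgt, if_pos h, mul_one]
      have : (0:ℝ) ≤ 1 / t * (1 / N) := by positivity
      linarith
    · have hgt : g t = 1 / ((T:ℝ) * N) := by simp [hg, h]
      rw [hgt, if_neg h, mul_zero, add_zero, div_mul_div_comm, one_mul]
      exact one_div_le_one_div_of_le (by nlinarith) (by nlinarith)
  have hgnn : ∀ t ∈ Finset.Icc 2 T, 0 ≤ g t := by
    intro t ht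
    simp only [Finset.mem_Icc] at ht
    have ht2 : (2:ℝ) ≤ t := by exact_mod_cast ht.1
    simp only [hg]
    split
    · positivity
    · have : 1 / (t:ℝ) ≤ 1 / 2 := by
        apply one_div_le_one_div_of_le <;> linarith
      linarith
  have hprod : ∏ t ∈ Finset.Icc 2 T, g t ≤
      ∏ t ∈ Finset.Icc 2 T,
        ((1 / (t : ℝ)) * (1 / (N : ℝ))
          + (1 - 1 / (t : ℝ)) * (if n t = n (t - 1) then 1 else 0)) :=
    Finset.prod_le_prod hgnn hfac
  -- split the product of g
  have hsplit : ∏ t ∈ Finset.Icc 2 T, g t =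
      (1 / ((T:ℝ) * N)) ^ K *
      ∏ t ∈ (Finset.Icc 2 T).filter (fun t => ¬ n t ≠ n (t - 1)), (1 - 1 / (t:ℝ)) := by
    rw [← Finset.prod_filter_mul_prod_filter_not (Finset.Icc 2 T) (fun t => n t ≠ n (t - 1))]
    congr 1
    · rw [Finset.prod_congr rfl (fun t ht => ?_), Finset.prod_const, hK]
      simp only [Finset.mem_filter] at ht
      simp [hg, ht.2]
    · exact Finset.prod_congr rfl (fun t ht => by
        simp only [Finset.mem_filter] at ht; simp [hg, ht.2])
  -- the non-switch product is at least 1/T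
  have hmono : (1:ℝ) / T ≤
      ∏ t ∈ (Finset.Icc 2 T).filter (fun t => ¬ n t ≠ n (t - 1)), (1 - 1 / (t:ℝ)) := by
    rw [← telescope T hT,
      ← Finset.prod_filter_mul_prod_filter_not (Finset.Icc 2 T)
        (fun t => ¬ n t ≠ n (t - 1)) (fun t => (1 - 1 / (t:ℝ)))]
    have h1 : ∀ t ∈ (Finset.Icc 2 T), (0:ℝ) ≤ 1 - 1 / t ∧ (1 - 1/(t:ℝ)) ≤ 1 := by
      intro t ht
      simp only [Finset.mem_Icc] at ht
      have ht2 : (2:ℝ) ≤ t := by exact_mod_cast ht.1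
      have : 1 / (t:ℝ) ≤ 1 / 2 := by
        apply one_div_le_one_div_of_le <;> linarith
      have : 0 < 1/(t:ℝ) := by positivity
      constructor <;> linarith
    have hA : (0:ℝ) ≤ ∏ t ∈ (Finset.Icc 2 T).filter (fun t => ¬ n t ≠ n (t - 1)),
        (1 - 1 / (t:ℝ)) :=
      Finset.prod_nonneg fun t ht => (h1 t (Finset.mem_filter.mp ht).1).1
    have hB : ∏ t ∈ (Finset.Icc 2 T).filter (fun t => ¬ ¬ n t ≠ n (t - 1)),
        (1 - 1 / (t:ℝ)) ≤ 1 :=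
      Finset.prod_le_one (fun t ht => (h1 t (Finset.mem_filter.mp ht).1).1)
        (fun t ht => (h1 t (Finset.mem_filter.mp ht).1).2)
    nlinarith
  -- lower bound for P
  have hL : (1 / ((N:ℝ) * T)) ^ (K + 1) ≤ P := by
    rw [hP]
    calc (1 / ((N:ℝ) * T)) ^ (K + 1)
        = (1 / N) * ((1 / ((T:ℝ) * N)) ^ K * (1 / T)) := by
          rw [pow_succ]; field_simp
      _ ≤ (1 / N) * ∏ t ∈ Finset.Icc 2 T, g t := by
          rw [hsplit]
          have hpw : (0:ℝ) ≤ (1 / ((T:ℝ) * N)) ^ K := by positivity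
          have h1N : (0:ℝ) ≤ 1 / N := by positivity
          exact mul_le_mul_of_nonneg_left (mul_le_mul_of_nonneg_left hmono hpw) h1N
      _ ≤ _ := by
          have h1N : (0:ℝ) ≤ 1 / N := by positivity
          exact mul_le_mul_of_nonneg_left hprod h1N
  have hLpos : (0:ℝ) < (1 / ((N:ℝ) * T)) ^ (K + 1) := by positivity
  have hlog := Real.log_le_log hLpos hL
  rw [Real.log_pow, Real.log_div one_ne_zero (by positivity), Real.log_one,
    Real.log_mul (by positivity) (by positivity)] at hlog
  push_cast at hlog ⊢
  nlinarith
end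

section
/- Let η, H > 0, N ≥ 1, and two probability vectors on {1,…,N}: w⁰(n) ∝ e^{-η A(n)} and w^D(n) ∝ e^{-η B(n)}, where A(n) - B(n) ∈ [0, m·H] for all n and some integer m ≥ 0. Then for any loss vector l ∈ [0,H]^N, |⟨w⁰, l⟩ - ⟨w^D, l⟩| ≤ η·H²·m/4. -/
lemma aux_exp_ineq (x : ℝ) (hx : 0 ≤ x) :
    2 * (1 - Real.exp (-x)) ≤ (1 + Real.exp (-x)) * x := by
  have key : (2 - x) * Real.exp x ≤ 2 + x := by
    have hd1 : ∀ y : ℝ, HasDerivAt (fun y : ℝ => 2 + y - (2 - y) * Real.exp y)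
        (1 + (y - 1) * Real.exp y) y := by
      intro y
      have h1 : HasDerivAt (fun y : ℝ => (2 - y) * Real.exp y)
          ((-1) * Real.exp y + (2 - y) * Real.exp y) y :=
        (((hasDerivAt_id y).const_sub 2).mul (Real.hasDerivAt_exp y))
      have h2 : HasDerivAt (fun y : ℝ => 2 + y) (0 + 1) y :=
        (hasDerivAt_const y 2).add (hasDerivAt_id y)
      have h3 := h2.sub h1
      exact h3.congr_deriv (by ring)
    have hd2 : ∀ y : ℝ, HasDerivAt (fun y : ℝ => 1 + (y - 1) * Real.exp y)
        (y * Real.exp y) y := by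
      intro y
      have h1 : HasDerivAt (fun y : ℝ => (y - 1) * Real.exp y)
          (1 * Real.exp y + (y - 1) * Real.exp y) y :=
        ((hasDerivAt_id y).sub_const 1).mul (Real.hasDerivAt_exp y)
      have h3 := (hasDerivAt_const y 1).add h1
      exact h3.congr_deriv (by ring)
    have hg0 : ∀ y : ℝ, 0 ≤ y → 0 ≤ 1 + (y - 1) * Real.exp y := by
      have hmono : MonotoneOn (fun y : ℝ => 1 + (y - 1) * Real.exp y) (Set.Ici 0) := by
        apply monotoneOn_of_deriv_nonneg (convex_Ici 0)
        · exact Continuous.continuousOn (by continuity)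
        · intro z hz
          exact (hd2 z).differentiableAt.differentiableWithinAt
        · intro z hz
          rw [(hd2 z).deriv]
          rw [interior_Ici] at hz
          exact mul_nonneg (le_of_lt hz) (Real.exp_pos z).le
      intro y hy
      have h := hmono Set.self_mem_Ici (Set.mem_Ici.mpr hy) hy
      simpa using h
    have hmonof : MonotoneOn (fun y : ℝ => 2 + y - (2 - y) * Real.exp y) (Set.Ici 0) := by
      apply monotoneOn_of_deriv_nonneg (convex_Ici 0)
      · exact Continuous.continuousOn (by continuity)
      · intro z hz
        exact (hd1 z).differentiableAt.differentiableWithinAt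
      · intro z hz
        rw [(hd1 z).deriv]
        rw [interior_Ici] at hz
        exact hg0 z hz.le
    have h0 := hmonof Set.self_mem_Ici (Set.mem_Ici.mpr hx) hx
    simp [Real.exp_zero] at h0
    linarith
  have he : 0 < Real.exp x := Real.exp_pos x
  rw [Real.exp_neg]
  have h2 : Real.exp x * (Real.exp x)⁻¹ = 1 := mul_inv_cancel₀ he.ne'
  have h3 : 0 < (Real.exp x)⁻¹ := inv_pos.mpr he
  nlinarith [key, he, h2, h3]

set_option maxHeartbeats 1000000 in
/-- Per-step perturbation bound for exponential weights: if `w⁰ n ∝ e^{-η A n}`,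
`w^D n ∝ e^{-η B n}` with `A n - B n ∈ [0, m H]`, then for losses `l n ∈ [0, H]`,
`|⟨w⁰, l⟩ - ⟨w^D, l⟩| ≤ η H² m / 4`. -/
theorem stmt_11 (N : ℕ) (hN : 1 ≤ N) (η H : ℝ) (hη : 0 < η) (hH : 0 < H)
    (m : ℕ) (A B : Fin N → ℝ)
    (hAB : ∀ n, A n - B n ∈ Set.Icc (0 : ℝ) (m * H))
    (w0 wD : Fin N → ℝ)
    (hw0 : ∀ n, w0 n = Real.exp (-η * A n) / ∑ n', Real.exp (-η * A n'))
    (hwD : ∀ n, wD n = Real.exp (-η * B n) / ∑ n', Real.exp (-η * B n'))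
    (l : Fin N → ℝ) (hl : ∀ n, l n ∈ Set.Icc (0 : ℝ) H) :
    |(∑ n, w0 n * l n) - ∑ n, wD n * l n| ≤ η * H ^ 2 * m / 4 := by
  have hNe : Nonempty (Fin N) := ⟨⟨0, by omega⟩⟩
  rcases Nat.eq_zero_or_pos m with hm | hm
  · -- m = 0 : A = B, the two distributions coincide
    subst hm
    have hABeq : ∀ n, A n = B n := by
      intro n
      have h := hAB n
      simp only [Nat.cast_zero, zero_mul, Set.mem_Icc] at h
      linarith [h.1, h.2]
    have heq : ∀ n, w0 n = wD n := by
      intro n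
      rw [hw0 n, hwD n]
      congr 1
      · rw [hABeq n]
      · exact Finset.sum_congr rfl fun k _ => by rw [hABeq k]
    simp [heq]
  -- main case : m ≥ 1
  set c : ℝ := (m : ℝ) * H with hc
  have hc0 : 0 < c := by
    have h1m : (1 : ℝ) ≤ (m : ℝ) := by exact_mod_cast hm
    nlinarith
  set p : Fin N → ℝ := fun n => Real.exp (-η * B n) with hpdef
  set g : Fin N → ℝ := fun n => Real.exp (-η * (A n - B n)) with hgdef
  have hpg : ∀ n, Real.exp (-η * A n) = p n * g n := by
    intro n
    rw [hpdef, hgdef, ← Real.exp_add]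
    congr 1
    ring
  have hp : ∀ n, 0 < p n := fun n => Real.exp_pos _
  set a : ℝ := Real.exp (-(η * c)) with hadef
  have ha0 : 0 < a := Real.exp_pos _
  have ha1 : a < 1 := by
    rw [hadef]
    apply Real.exp_lt_one_iff.mpr
    nlinarith
  have hg : ∀ n, a ≤ g n ∧ g n ≤ 1 := by
    intro n
    obtain ⟨h1, h2⟩ := hAB n
    constructor
    · exact Real.exp_le_exp.mpr (by nlinarith)
    · rw [hgdef]
      apply Real.exp_le_one_iff.mpr
      nlinarith
  set Z : ℝ := ∑ n, p n with hZdef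
  have hZ : 0 < Z := Finset.sum_pos (fun n _ => hp n) Finset.univ_nonempty
  set Zg : ℝ := ∑ n, p n * g n with hZgdef
  have hZg : 0 < Zg :=
    Finset.sum_pos (fun n _ => mul_pos (hp n) (lt_of_lt_of_le ha0 (hg n).1))
      Finset.univ_nonempty
  have hZgZ : Zg ≤ Z := by
    apply Finset.sum_le_sum
    intro n _
    nlinarith [(hg n).2, hp n]
  have haZ : a * Z ≤ Zg := by
    rw [hZdef, Finset.mul_sum]
    apply Finset.sum_le_sum
    intro n _
    nlinarith [(hg n).1, hp n]
  set μ : ℝ := Zg / Z with hμdef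
  have hμ0 : 0 < μ := div_pos hZg hZ
  have hμa : a ≤ μ := by rw [hμdef, le_div_iff₀ hZ]; linarith
  have hμ1 : μ ≤ 1 := by rw [hμdef, div_le_one hZ]; exact hZgZ
  have hZgμ : Zg = μ * Z := by rw [hμdef]; field_simp
  -- express weights
  have hw0' : ∀ n, w0 n = p n * g n / Zg := by
    intro n
    rw [hw0 n, hpg n, hZgdef]
    congr 1
    exact Finset.sum_congr rfl fun k _ => hpg k
  have hwD' : ∀ n, wD n = p n / Z := fun n => hwD n
  have hdiff : ∀ n, w0 n - wD n = p n * (g n - μ) / (μ * Z) := by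
    intro n
    rw [hw0' n, hwD' n, hZgμ]
    field_simp
  have hs0 : ∑ n, w0 n = 1 := by
    simp only [hw0']
    rw [← Finset.sum_div, ← hZgdef, div_self hZg.ne']
  have hsD : ∑ n, wD n = 1 := by
    simp only [hwD']
    rw [← Finset.sum_div, ← hZdef, div_self hZ.ne']
  -- Step A : reduce to L1 distance
  have keyA : |(∑ n, w0 n * l n) - ∑ n, wD n * l n| ≤ (H / 2) * ∑ n, |w0 n - wD n| := by
    have h1 : ∑ n, (w0 n - wD n) * (l n - H / 2)
        = (∑ n, w0 n * l n) - ∑ n, wD n * l n := by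
      have e : ∀ n ∈ Finset.univ, (w0 n - wD n) * (l n - H / 2)
          = (w0 n * l n - wD n * l n) - (H / 2 * w0 n - H / 2 * wD n) :=
        fun n _ => by ring
      rw [Finset.sum_congr rfl e, Finset.sum_sub_distrib, Finset.sum_sub_distrib,
        Finset.sum_sub_distrib, ← Finset.mul_sum, ← Finset.mul_sum, hs0, hsD]
      ring
    rw [← h1]
    calc |∑ n, (w0 n - wD n) * (l n - H / 2)|
        ≤ ∑ n, |(w0 n - wD n) * (l n - H / 2)| := Finset.abs_sum_le_sum_abs _ _
      _ ≤ ∑ n, |w0 n - wD n| * (H / 2) := by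
          apply Finset.sum_le_sum
          intro n _
          rw [abs_mul]
          apply mul_le_mul_of_nonneg_left _ (abs_nonneg _)
          have hln := hl n
          rw [abs_le]
          exact ⟨by linarith [hln.1], by linarith [hln.2]⟩
      _ = (H / 2) * ∑ n, |w0 n - wD n| := by rw [← Finset.sum_mul]; ring
  -- Step B : L1 distance via g
  have hμZ : 0 < μ * Z := mul_pos hμ0 hZ
  have keyB : ∑ n, |w0 n - wD n| = (∑ n, p n * |g n - μ|) / (μ * Z) := by
    rw [Finset.sum_div]
    apply Finset.sum_congr rfl
    intro n _
    rw [hdiff n, abs_div, abs_of_pos hμZ, abs_mul, abs_of_pos (hp n)]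
  -- Step C : positive part
  have hzero : ∑ n, p n * (g n - μ) = 0 := by
    have h : ∑ n, p n * (g n - μ) = Zg - μ * Z := by
      rw [hZgdef, hZdef, Finset.mul_sum, ← Finset.sum_sub_distrib]
      exact Finset.sum_congr rfl fun n _ => by ring
    rw [h, hZgμ]
    ring
  have keyC : ∑ n, p n * |g n - μ| = 2 * ∑ n, p n * max (g n - μ) 0 := by
    have h : ∀ n ∈ Finset.univ, p n * |g n - μ|
        = 2 * (p n * max (g n - μ) 0) - p n * (g n - μ) := by
      intro n _
      rcases le_total (g n - μ) 0 with h | h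
      · rw [abs_of_nonpos h, max_eq_right h]; ring
      · rw [abs_of_nonneg h, max_eq_left h]; ring
    rw [Finset.sum_congr rfl h, Finset.sum_sub_distrib, hzero, ← Finset.mul_sum]
    ring
  -- Step D : positive part bound
  have h1a : 0 < 1 - a := by linarith
  have keyD : ∑ n, p n * max (g n - μ) 0 ≤ (1 - μ) * (μ - a) * Z / (1 - a) := by
    have hmax : ∀ n, max (g n - μ) 0 ≤ (1 - μ) * (g n - a) / (1 - a) := by
      intro n
      obtain ⟨hga, hg1⟩ := hg n
      rcases le_total (g n - μ) 0 with h | h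
      · rw [max_eq_right h]
        apply div_nonneg _ h1a.le
        nlinarith
      · rw [max_eq_left h, le_div_iff₀ h1a]
        nlinarith [mul_nonneg (sub_nonneg.mpr hμa) (sub_nonneg.mpr hg1)]
    calc ∑ n, p n * max (g n - μ) 0
        ≤ ∑ n, p n * ((1 - μ) * (g n - a) / (1 - a)) := by
          apply Finset.sum_le_sum
          intro n _
          exact mul_le_mul_of_nonneg_left (hmax n) (hp n).le
      _ = ∑ n, ((1 - μ) / (1 - a) * (p n * g n - a * p n)) :=
          Finset.sum_congr rfl fun n _ => by ring
      _ = (1 - μ) / (1 - a) * (Zg - a * Z) := by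
          rw [hZgdef, hZdef, Finset.mul_sum, mul_sub, Finset.mul_sum, Finset.mul_sum,
            ← Finset.sum_sub_distrib]
          exact Finset.sum_congr rfl fun n _ => by ring
      _ = (1 - μ) * (μ - a) * Z / (1 - a) := by
          rw [hZgμ]
          field_simp
  -- Step E+F : numeric bound
  set s : ℝ := Real.exp (-(η * c / 2)) with hsdef
  have hs2 : s * s = a := by
    rw [hsdef, hadef, ← Real.exp_add]
    congr 1
    ring
  have hs0' : 0 < s := Real.exp_pos _
  have hexp : 2 * (1 - s) ≤ (1 + s) * (η * c / 2) :=
    aux_exp_ineq (η * c / 2) (by positivity)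
  have hs1 : s ≤ 1 := Real.exp_le_one_iff.mpr (by nlinarith)
  have keyE : 2 * ((1 - μ) * (μ - a)) / ((1 - a) * μ) ≤ η * c / 2 := by
    rw [div_le_iff₀ (mul_pos h1a hμ0)]
    have t1 : 0 ≤ μ * ((1 - s) * ((1 + s) * (η * c / 2) - 2 * (1 - s))) := by
      apply mul_nonneg hμ0.le
      apply mul_nonneg (by linarith)
      linarith
    have h3 : 1 - a = (1 - s) * (1 + s) := by rw [← hs2]; ring
    have h2 : (1 - μ) * (μ - s * s) ≤ μ * (1 - s) ^ 2 := by
      nlinarith [sq_nonneg (μ - s)]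
    rw [hs2] at h2
    calc 2 * ((1 - μ) * (μ - a)) ≤ 2 * (μ * (1 - s) ^ 2) := by linarith
      _ ≤ η * c / 2 * ((1 - a) * μ) := by rw [h3]; nlinarith [t1]
  -- combine
  have hL1 : ∑ n, |w0 n - wD n| ≤ η * c / 2 := by
    rw [keyB, keyC]
    calc (2 * ∑ n, p n * max (g n - μ) 0) / (μ * Z)
        ≤ (2 * ((1 - μ) * (μ - a) * Z / (1 - a))) / (μ * Z) := by
          exact (div_le_div_iff_of_pos_right hμZ).mpr (by linarith [keyD])
      _ = 2 * ((1 - μ) * (μ - a)) / ((1 - a) * μ) := by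
          field_simp
      _ ≤ η * c / 2 := keyE
  calc |(∑ n, w0 n * l n) - ∑ n, wD n * l n|
      ≤ (H / 2) * ∑ n, |w0 n - wD n| := keyA
    _ ≤ (H / 2) * (η * c / 2) := by
        apply mul_le_mul_of_nonneg_left hL1 (by linarith)
    _ = η * H ^ 2 * m / 4 := by rw [hc]; ring
end

section
/- Let η, H > 0, T ≥ 1, N ≥ 1, losses l_t ∈ [0,H]^N, and delays D(t) with t + D(t) ≤ T. Let 𝒟_t = {τ : τ + D(τ) ≤ t}. Let H_T⁰ be the cumulative loss of Hedge with weights w_t⁰(n) ∝ e^{-η Σ_{τ<t} l_τ(n)} and H_T^𝒟 the loss of delayed Hedge with w_t^𝒟(n) ∝ e^{-η Σ_{τ∈𝒟_{t-1}} l_τ(n)} (uniform prior in both). Then |H_T⁰ - H_T^𝒟| ≤ (η H²/4)·Σ_{t=1}^T D(t). -/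
open Finset

lemma cov_bound {N : ℕ} (w X Y : Fin N → ℝ) (hw : ∀ n, 0 ≤ w n)
    (hsum : ∑ n, w n = 1) {a b c d : ℝ} (hab : a ≤ b) (hcd : c ≤ d)
    (hX : ∀ n, X n ∈ Set.Icc a b) (hY : ∀ n, Y n ∈ Set.Icc c d) :
    |(∑ n, w n * (X n * Y n)) - (∑ n, w n * X n) * (∑ n, w n * Y n)|
      ≤ (b - a) * (d - c) / 4 := by
  set μ := ∑ n, w n * X n with hμ
  set ν := ∑ n, w n * Y n with hν
  have key : ∑ n, w n * ((X n - μ) * (Y n - ν))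
      = (∑ n, w n * (X n * Y n)) - μ * ν := by
    have h1 : ∀ n : Fin N, w n * ((X n - μ) * (Y n - ν))
        = w n * (X n * Y n) - ν * (w n * X n) - μ * (w n * Y n) + (μ * ν) * w n := by
      intro n; ring
    simp_rw [h1, Finset.sum_add_distrib, Finset.sum_sub_distrib, ← Finset.mul_sum]
    rw [← hμ, ← hν, hsum]; ring
  have cs : (∑ n, w n * ((X n - μ) * (Y n - ν)))^2
      ≤ (∑ n, w n * (X n - μ)^2) * (∑ n, w n * (Y n - ν)^2) := by
    have h := Finset.sum_mul_sq_le_sq_mul_sq Finset.univ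
      (fun n => Real.sqrt (w n) * (X n - μ)) (fun n => Real.sqrt (w n) * (Y n - ν))
    have e1 : ∀ n : Fin N, (Real.sqrt (w n) * (X n - μ)) * (Real.sqrt (w n) * (Y n - ν))
        = w n * ((X n - μ) * (Y n - ν)) := by
      intro n
      rw [show (Real.sqrt (w n) * (X n - μ)) * (Real.sqrt (w n) * (Y n - ν))
          = (Real.sqrt (w n) * Real.sqrt (w n)) * ((X n - μ) * (Y n - ν)) by ring,
        Real.mul_self_sqrt (hw n)]
    have e2 : ∀ n : Fin N, (Real.sqrt (w n) * (X n - μ))^2 = w n * (X n - μ)^2 := by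
      intro n; rw [mul_pow, Real.sq_sqrt (hw n)]
    have e3 : ∀ n : Fin N, (Real.sqrt (w n) * (Y n - ν))^2 = w n * (Y n - ν)^2 := by
      intro n; rw [mul_pow, Real.sq_sqrt (hw n)]
    simp_rw [e1, e2, e3] at h
    exact h
  have varbound : ∀ (Z : Fin N → ℝ) (p q : ℝ), p ≤ q → (∀ n, Z n ∈ Set.Icc p q) →
      ∑ n, w n * (Z n - (∑ n, w n * Z n))^2 ≤ ((q - p)/2)^2 := by
    intro Z p q hpq hZ
    set m := (p + q)/2
    set μZ := ∑ n, w n * Z n with hμZ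
    have h0 : ∑ n, w n * (Z n - μZ) = 0 := by
      simp_rw [mul_sub, Finset.sum_sub_distrib]
      rw [← hμZ]
      rw [show ∑ n, w n * μZ = (∑ n, w n) * μZ by rw [Finset.sum_mul], hsum]
      ring
    have hid : ∑ n, w n * (Z n - m)^2
        = (∑ n, w n * (Z n - μZ)^2) + (μZ - m)^2 := by
      have h1 : ∀ n : Fin N, w n * (Z n - m)^2
          = w n * (Z n - μZ)^2 + (2*(μZ - m)) * (w n * (Z n - μZ)) + (μZ - m)^2 * w n := by
        intro n; ring
      simp_rw [h1, Finset.sum_add_distrib, ← Finset.mul_sum]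
      rw [h0, hsum]; ring
    have hle : ∑ n, w n * (Z n - μZ)^2 ≤ ∑ n, w n * (Z n - m)^2 := by
      rw [hid]; nlinarith [sq_nonneg (μZ - m)]
    refine hle.trans ?_
    have hpt : ∀ n ∈ Finset.univ (α := Fin N), w n * (Z n - m)^2 ≤ w n * ((q-p)/2)^2 := by
      intro n _
      have h1 := (hZ n).1; have h2 := (hZ n).2
      have : (Z n - m)^2 ≤ ((q-p)/2)^2 := by
        apply sq_le_sq' <;> simp only [m] <;> linarith
      exact mul_le_mul_of_nonneg_left this (hw n)
    calc ∑ n, w n * (Z n - m)^2 ≤ ∑ n, w n * ((q-p)/2)^2 := Finset.sum_le_sum hpt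
      _ = ((q-p)/2)^2 := by rw [← Finset.sum_mul, hsum, one_mul]
  have vX := varbound X a b hab hX
  have vY := varbound Y c d hcd hY
  have vYnn : 0 ≤ ∑ n, w n * (Y n - ν)^2 :=
    Finset.sum_nonneg fun n _ => mul_nonneg (hw n) (sq_nonneg _)
  have vXnn : 0 ≤ ∑ n, w n * (X n - μ)^2 :=
    Finset.sum_nonneg fun n _ => mul_nonneg (hw n) (sq_nonneg _)
  have hprod : (∑ n, w n * ((X n - μ) * (Y n - ν)))^2 ≤ (((b-a)/2)^2) * (((d-c)/2)^2) :=
    cs.trans (mul_le_mul vX vY vYnn (by positivity))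
  rw [← key]
  set c0 := ∑ n, w n * ((X n - μ) * (Y n - ν))
  nlinarith [abs_nonneg c0, sq_abs c0, mul_nonneg (sub_nonneg.2 hab) (sub_nonneg.2 hcd)]

lemma softmax_diff {N : ℕ} (hN : 0 < N) (A E L : Fin N → ℝ) (η H K : ℝ)
    (hη : 0 ≤ η) (hH : 0 ≤ H) (hK : 0 ≤ K)
    (hE : ∀ n, E n ∈ Set.Icc 0 K) (hL : ∀ n, L n ∈ Set.Icc 0 H)
    (hcov : ∀ (w : Fin N → ℝ), (∀ n, 0 ≤ w n) → (∑ n, w n = 1) →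
      |(∑ n, w n * (E n * L n)) - (∑ n, w n * E n) * (∑ n, w n * L n)| ≤ K * H / 4) :
    |(∑ n, Real.exp (-A n - η * E n) * L n) / (∑ n, Real.exp (-A n - η * E n))
      - (∑ n, Real.exp (-A n) * L n) / (∑ n, Real.exp (-A n))| ≤ η * (K * H) / 4 := by
  haveI : Nonempty (Fin N) := Fin.pos_iff_nonempty.mp hN
  set Z : ℝ → ℝ := fun s => ∑ n, Real.exp (-A n - s * E n) with hZdef
  set F : ℝ → ℝ := fun s => ∑ n, Real.exp (-A n - s * E n) * L n with hFdef
  set W : ℝ → ℝ := fun s => ∑ n, Real.exp (-A n - s * E n) * E n with hWdef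
  set V : ℝ → ℝ := fun s => ∑ n, Real.exp (-A n - s * E n) * (E n * L n) with hVdef
  have hZpos : ∀ s, 0 < Z s := fun s =>
    Finset.sum_pos (fun n _ => Real.exp_pos _) Finset.univ_nonempty
  set g : ℝ → ℝ := fun s => F s / Z s with hgdef
  set g' : ℝ → ℝ := fun s => (F s * W s - V s * Z s) / (Z s)^2 with hg'def
  have hterm : ∀ (n : Fin N) (s : ℝ),
      HasDerivAt (fun s => Real.exp (-A n - s * E n))
        (Real.exp (-A n - s * E n) * (-E n)) s := by
    intro n s
    have h1 : HasDerivAt (fun s : ℝ => -A n - s * E n) (-E n) s := by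
      simpa using ((hasDerivAt_id s).mul_const (E n)).const_sub (-A n)
    exact h1.exp
  have hZder : ∀ s, HasDerivAt Z (-(W s)) s := by
    intro s
    have h := HasDerivAt.fun_sum (u := Finset.univ)
      (fun n _ => hterm n s)
    have : (∑ n, Real.exp (-A n - s * E n) * (-E n)) = -(W s) := by
      simp [hWdef, mul_neg, Finset.sum_neg_distrib]
    rwa [this] at h
  have hFder : ∀ s, HasDerivAt F (-(V s)) s := by
    intro s
    have h := HasDerivAt.fun_sum (u := Finset.univ)
      (fun n (_ : n ∈ Finset.univ) => (hterm n s).mul_const (L n))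
    have : (∑ n, Real.exp (-A n - s * E n) * (-E n) * L n) = -(V s) := by
      simp only [hVdef, ← Finset.sum_neg_distrib]
      exact Finset.sum_congr rfl fun n _ => by ring
    rwa [this] at h
  have hgder : ∀ s, HasDerivAt g (g' s) s := by
    intro s
    have h := (hFder s).div (hZder s) (ne_of_gt (hZpos s))
    have : (-(V s) * Z s - F s * -(W s)) / Z s ^ 2 = g' s := by
      rw [hg'def]; ring_nf
    rwa [this] at h
  have hbound : ∀ s, |g' s| ≤ K * H / 4 := by
    intro s
    set w : Fin N → ℝ := fun n => Real.exp (-A n - s * E n) / Z s with hwdef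
    have hwnn : ∀ n, 0 ≤ w n := fun n => div_nonneg (Real.exp_pos _).le (hZpos s).le
    have hwsum : ∑ n, w n = 1 := by
      rw [hwdef]
      simp only [← Finset.sum_div]
      exact div_self (ne_of_gt (hZpos s))
    have h := hcov w hwnn hwsum
    have e1 : ∑ n, w n * (E n * L n) = V s / Z s := by
      simp only [hwdef, hVdef, div_mul_eq_mul_div, ← Finset.sum_div]
    have e2 : ∑ n, w n * E n = W s / Z s := by
      simp only [hwdef, hWdef, div_mul_eq_mul_div, ← Finset.sum_div]
    have e3 : ∑ n, w n * L n = F s / Z s := by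
      simp only [hwdef, hFdef, div_mul_eq_mul_div, ← Finset.sum_div]
    rw [e1, e2, e3] at h
    have e4 : g' s = -(V s / Z s - W s / Z s * (F s / Z s)) := by
      rw [hg'def]
      field_simp
      ring
    rw [e4, abs_neg]
    exact h
  have hmvt := norm_image_sub_le_of_norm_deriv_le_segment'
    (f := g) (f' := g') (a := 0) (b := η) (C := K * H / 4)
    (fun x _ => (hgder x).hasDerivWithinAt)
    (fun x _ => hbound x) η (Set.right_mem_Icc.mpr hη)
  simp only [Real.norm_eq_abs, sub_zero] at hmvt
  have hg0 : g 0 = (∑ n, Real.exp (-A n) * L n) / (∑ n, Real.exp (-A n)) := by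
    simp [hgdef, hFdef, hZdef]
  have hgη : g η = (∑ n, Real.exp (-A n - η * E n) * L n)
      / (∑ n, Real.exp (-A n - η * E n)) := rfl
  rw [hgη, hg0] at hmvt
  calc _ ≤ K * H / 4 * η := hmvt
    _ = η * (K * H) / 4 := by ring

lemma comb_id (T : ℕ) (D : ℕ → ℕ) (hD : ∀ t ∈ Finset.Icc 1 T, t + D t ≤ T) :
    ∑ t ∈ Finset.Icc 1 T, ((Finset.Icc 1 (t-1)).filter (fun τ => t ≤ τ + D τ)).card
      = ∑ t ∈ Finset.Icc 1 T, D t := by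
  have step1 : ∀ t ∈ Finset.Icc 1 T,
      ((Finset.Icc 1 (t-1)).filter (fun τ => t ≤ τ + D τ)).card
      = ∑ τ ∈ Finset.Icc 1 T, if τ + 1 ≤ t ∧ t ≤ τ + D τ then 1 else 0 := by
    intro t ht
    rw [Finset.mem_Icc] at ht
    have : (Finset.Icc 1 (t-1)).filter (fun τ => t ≤ τ + D τ)
        = (Finset.Icc 1 T).filter (fun τ => τ + 1 ≤ t ∧ t ≤ τ + D τ) := by
      ext τ
      simp only [Finset.mem_filter, Finset.mem_Icc]
      omega
    rw [this, Finset.card_filter]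
  rw [Finset.sum_congr rfl step1, Finset.sum_comm]
  refine Finset.sum_congr rfl fun τ hτ => ?_
  have hτ' := Finset.mem_Icc.mp hτ
  have hDτ := hD τ hτ
  have : (∑ t ∈ Finset.Icc 1 T, if τ + 1 ≤ t ∧ t ≤ τ + D τ then 1 else 0)
      = ((Finset.Icc 1 T).filter (fun t => τ + 1 ≤ t ∧ t ≤ τ + D τ)).card := by
    rw [Finset.card_filter]
  rw [this]
  have : (Finset.Icc 1 T).filter (fun t => τ + 1 ≤ t ∧ t ≤ τ + D τ)
      = Finset.Icc (τ + 1) (τ + D τ) := by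
    ext t
    simp only [Finset.mem_filter, Finset.mem_Icc]
    omega
  rw [this, Nat.card_Icc]
  omega


/-- Step 1 of the proof of Theorem 1: the cumulative losses of non-delayed Hedge and
delayed Hedge (both with uniform prior) differ by at most `(η H²/4) Σ_t D t`. -/
theorem stmt_13 (N T : ℕ) (hN : 1 ≤ N) (hT : 1 ≤ T) (η H : ℝ)
    (hη : 0 < η) (hH : 0 < H) (l : ℕ → Fin N → ℝ)
    (hl : ∀ t ∈ Finset.Icc 1 T, ∀ n, l t n ∈ Set.Icc (0 : ℝ) H)
    (D : ℕ → ℕ) (hD : ∀ t ∈ Finset.Icc 1 T, t + D t ≤ T)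
    (𝒟 : ℕ → Finset ℕ)
    (h𝒟 : ∀ t, 𝒟 t = (Finset.Icc 1 T).filter (fun τ => τ + D τ ≤ t))
    (w0 wD : ℕ → Fin N → ℝ)
    (hw0 : ∀ t n, w0 t n =
      Real.exp (-η * ∑ τ ∈ Finset.Icc 1 (t - 1), l τ n) /
        ∑ n', Real.exp (-η * ∑ τ ∈ Finset.Icc 1 (t - 1), l τ n'))
    (hwD : ∀ t n, wD t n =
      Real.exp (-η * ∑ τ ∈ 𝒟 (t - 1), l τ n) /
        ∑ n', Real.exp (-η * ∑ τ ∈ 𝒟 (t - 1), l τ n')) :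
    |(∑ t ∈ Finset.Icc 1 T, ∑ n, w0 t n * l t n)
        - ∑ t ∈ Finset.Icc 1 T, ∑ n, wD t n * l t n|
      ≤ η * H ^ 2 / 4 * ∑ t ∈ Finset.Icc 1 T, (D t : ℝ) := by
  have main : ∀ t ∈ Finset.Icc 1 T,
      |(∑ n, w0 t n * l t n) - ∑ n, wD t n * l t n|
        ≤ η * H ^ 2 / 4 *
          (((Finset.Icc 1 (t-1)).filter (fun τ => t ≤ τ + D τ)).card : ℝ) := by
    intro t ht
    have ht' := Finset.mem_Icc.mp ht
    set Δ := (Finset.Icc 1 (t-1)).filter (fun τ => t ≤ τ + D τ) with hΔdef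
    set A : Fin N → ℝ := fun n => η * ∑ τ ∈ 𝒟 (t-1), l τ n with hAdef
    set E : Fin N → ℝ := fun n => ∑ τ ∈ Δ, l τ n with hEdef
    have hΔ𝒟 : 𝒟 (t-1) = (Finset.Icc 1 (t-1)).filter (fun τ => ¬ (t ≤ τ + D τ)) := by
      rw [h𝒟]
      ext τ
      simp only [Finset.mem_filter, Finset.mem_Icc]
      omega
    have hsplit : ∀ n, (∑ τ ∈ Δ, l τ n) + (∑ τ ∈ 𝒟 (t-1), l τ n)
        = ∑ τ ∈ Finset.Icc 1 (t-1), l τ n := by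
      intro n
      rw [hΔdef, hΔ𝒟]
      exact Finset.sum_filter_add_sum_filter_not _ _ _
    have hlmem : ∀ τ ∈ Δ, ∀ n, l τ n ∈ Set.Icc (0:ℝ) H := by
      intro τ hτ n
      have hτ' := Finset.mem_Icc.mp (Finset.mem_filter.mp hτ).1
      exact hl τ (Finset.mem_Icc.mpr ⟨hτ'.1, by omega⟩) n
    have hE : ∀ n, E n ∈ Set.Icc 0 (H * (Δ.card : ℝ)) := by
      intro n
      constructor
      · exact Finset.sum_nonneg fun τ hτ => (hlmem τ hτ n).1
      · calc E n ≤ ∑ τ ∈ Δ, H := Finset.sum_le_sum fun τ hτ => (hlmem τ hτ n).2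
          _ = H * (Δ.card : ℝ) := by rw [Finset.sum_const, nsmul_eq_mul]; ring
    have hcov : ∀ (w : Fin N → ℝ), (∀ n, 0 ≤ w n) → (∑ n, w n = 1) →
        |(∑ n, w n * (E n * l t n)) - (∑ n, w n * E n) * (∑ n, w n * l t n)|
          ≤ (H * (Δ.card : ℝ)) * H / 4 := by
      intro w hw hwsum
      have := cov_bound w E (l t) hw hwsum (a := 0) (b := H * (Δ.card : ℝ))
        (c := 0) (d := H) (by positivity) hH.le hE (hl t ht)
      calc _ ≤ (H * (Δ.card : ℝ) - 0) * (H - 0) / 4 := this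
        _ = (H * (Δ.card : ℝ)) * H / 4 := by ring
    have hsd := softmax_diff (Nat.lt_of_lt_of_le Nat.zero_lt_one hN) A E (l t)
      η H (H * (Δ.card : ℝ)) hη.le hH.le (by positivity) hE (hl t ht) hcov
    have ew0 : ∀ n : Fin N, Real.exp (-η * ∑ τ ∈ Finset.Icc 1 (t-1), l τ n)
        = Real.exp (-A n - η * E n) := by
      intro n
      congr 1
      rw [← hsplit n, hAdef, hEdef]
      ring
    have ewD : ∀ n : Fin N, Real.exp (-η * ∑ τ ∈ 𝒟 (t-1), l τ n)
        = Real.exp (-A n) := by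
      intro n
      congr 1
      rw [hAdef]
      ring
    have e0 : ∑ n, w0 t n * l t n
        = (∑ n, Real.exp (-A n - η * E n) * l t n)
          / (∑ n, Real.exp (-A n - η * E n)) := by
      simp_rw [hw0 t, div_mul_eq_mul_div, ← Finset.sum_div]
      congr 1
      · exact Finset.sum_congr rfl fun n _ => by rw [ew0 n]
      · exact Finset.sum_congr rfl fun n _ => ew0 n
    have eD : ∑ n, wD t n * l t n
        = (∑ n, Real.exp (-A n) * l t n) / (∑ n, Real.exp (-A n)) := by
      simp_rw [hwD t, div_mul_eq_mul_div, ← Finset.sum_div]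
      congr 1
      · exact Finset.sum_congr rfl fun n _ => by rw [ewD n]
      · exact Finset.sum_congr rfl fun n _ => ewD n
    rw [e0, eD]
    calc _ ≤ η * ((H * (Δ.card : ℝ)) * H) / 4 := hsd
      _ = η * H ^ 2 / 4 * (Δ.card : ℝ) := by ring
  calc |(∑ t ∈ Finset.Icc 1 T, ∑ n, w0 t n * l t n)
        - ∑ t ∈ Finset.Icc 1 T, ∑ n, wD t n * l t n|
      = |∑ t ∈ Finset.Icc 1 T, ((∑ n, w0 t n * l t n) - ∑ n, wD t n * l t n)| := by
        rw [Finset.sum_sub_distrib]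
    _ ≤ ∑ t ∈ Finset.Icc 1 T, |(∑ n, w0 t n * l t n) - ∑ n, wD t n * l t n| :=
        Finset.abs_sum_le_sum_abs _ _
    _ ≤ ∑ t ∈ Finset.Icc 1 T, η * H ^ 2 / 4 *
          (((Finset.Icc 1 (t-1)).filter (fun τ => t ≤ τ + D τ)).card : ℝ) :=
        Finset.sum_le_sum main
    _ = η * H ^ 2 / 4 * ∑ t ∈ Finset.Icc 1 T, (D t : ℝ) := by
        rw [← Finset.mul_sum]
        congr 1
        rw [show ∑ t ∈ Finset.Icc 1 T, (D t : ℝ)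
            = ((∑ t ∈ Finset.Icc 1 T, D t : ℕ) : ℝ) by push_cast; ring]
        rw [← comb_id T D hD]
        push_cast
        ring
end

section
/- Let η, H > 0, N ≥ 1, T ≥ 1, losses l_t ∈ [0,H]^N, delays D(t) with t + D(t) ≤ T, switch probabilities α_t = 1/t, and let the delayed Fixed Share algorithm use weights w_t = posterior p(n_t | revealed losses) under the Fixed Share Markov model with uniform prior. Then for every sequence N_T = (n_1,…,n_T) with K switches, Σ_{t=1}^T ⟨w_t, l_t⟩ - Σ_{t=1}^T l_t(n_t) ≤ (K+1)(ln N + ln T)/η + η H² T/8 + (η H²/4)·Σ_{t=1}^T D(t). -/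
open Finset Real

variable {ι : Type*} [Fintype ι]

set_option maxHeartbeats 1000000 in
/-- Covariance bound: for nonneg weights and `u, v ∈ [0,H]`,
`(Σ w u v)(Σ w) ≤ (Σ w u)(Σ w v) + H²/4 (Σ w)²`. -/
lemma cov_le (w u v : ι → ℝ) (H : ℝ)
    (hw : ∀ i, 0 ≤ w i) (hW : 0 < ∑ i, w i)
    (hu : ∀ i, u i ∈ Set.Icc (0:ℝ) H) (hv : ∀ i, v i ∈ Set.Icc (0:ℝ) H) :
    (∑ i, w i * u i * v i) * (∑ i, w i)
      ≤ (∑ i, w i * u i) * (∑ i, w i * v i) + H ^ 2 / 4 * (∑ i, w i) ^ 2 := by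
  set W := ∑ i, w i with hWdef
  set U := ∑ i, w i * u i with hU
  set V := ∑ i, w i * v i with hV
  set Q := ∑ i, w i * u i * v i with hQ
  have key : W * (W * Q - U * V) ≤ W * (H ^ 2 / 4 * W ^ 2) := by
    have id1 : ∑ i, w i * (W * u i - U) * (W * v i - V)
        = W ^ 2 * Q - W * U * V := by
      have : ∀ i ∈ univ, w i * (W * u i - U) * (W * v i - V)
          = W^2 * (w i * u i * v i) - (W*V) * (w i * u i) - (W*U) * (w i * v i)
            + (U*V) * w i := fun i _ => by ring
      rw [Finset.sum_congr rfl this]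
      simp only [Finset.sum_add_distrib, Finset.sum_sub_distrib, ← Finset.mul_sum]
      rw [← hU, ← hV, ← hQ, ← hWdef]; ring
    have idu : ∑ i, w i * (W * u i - U) ^ 2 = W ^ 2 * (∑ i, w i * u i ^ 2) - W * U ^ 2 := by
      have : ∀ i ∈ univ, w i * (W * u i - U) ^ 2
          = W^2 * (w i * u i ^ 2) - (2*W*U) * (w i * u i) + U^2 * w i := fun i _ => by ring
      rw [Finset.sum_congr rfl this]
      simp only [Finset.sum_add_distrib, Finset.sum_sub_distrib, ← Finset.mul_sum]
      rw [← hU, ← hWdef]; ring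
    have idv : ∑ i, w i * (W * v i - V) ^ 2 = W ^ 2 * (∑ i, w i * v i ^ 2) - W * V ^ 2 := by
      have : ∀ i ∈ univ, w i * (W * v i - V) ^ 2
          = W^2 * (w i * v i ^ 2) - (2*W*V) * (w i * v i) + V^2 * w i := fun i _ => by ring
      rw [Finset.sum_congr rfl this]
      simp only [Finset.sum_add_distrib, Finset.sum_sub_distrib, ← Finset.mul_sum]
      rw [← hV, ← hWdef]; ring
    have ptw : ∑ i, w i * (W * u i - U) * (W * v i - V)
        ≤ (1/2) * (∑ i, w i * (W * u i - U) ^ 2) + (1/2) * (∑ i, w i * (W * v i - V) ^ 2) := by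
      rw [Finset.mul_sum, Finset.mul_sum, ← Finset.sum_add_distrib]
      apply Finset.sum_le_sum
      intro i _
      nlinarith [sq_nonneg ((W * u i - U) - (W * v i - V)), hw i, sq_nonneg (W * u i - U), sq_nonneg (W * v i - V)]
    have hu2 : ∑ i, w i * u i ^ 2 ≤ H * U := by
      rw [hU, Finset.mul_sum]
      apply Finset.sum_le_sum
      intro i _
      nlinarith [mul_nonneg (sub_nonneg.2 (hu i).2) (mul_nonneg (hw i) (hu i).1)]
    have hv2 : ∑ i, w i * v i ^ 2 ≤ H * V := by
      rw [hV, Finset.mul_sum]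
      apply Finset.sum_le_sum
      intro i _
      nlinarith [mul_nonneg (sub_nonneg.2 (hv i).2) (mul_nonneg (hw i) (hv i).1)]
    have hU0 : 0 ≤ U := Finset.sum_nonneg fun i _ => mul_nonneg (hw i) (hu i).1
    have hV0 : 0 ≤ V := Finset.sum_nonneg fun i _ => mul_nonneg (hw i) (hv i).1
    have hUH : U ≤ H * W := by
      rw [hU, hWdef, Finset.mul_sum]
      exact Finset.sum_le_sum fun i _ => by
        rw [mul_comm (H) (w i)]; exact mul_le_mul_of_nonneg_left (hu i).2 (hw i)
    have hVH : V ≤ H * W := by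
      rw [hV, hWdef, Finset.mul_sum]
      exact Finset.sum_le_sum fun i _ => by
        rw [mul_comm (H) (w i)]; exact mul_le_mul_of_nonneg_left (hv i).2 (hw i)
    have bu : W ^ 2 * (∑ i, w i * u i ^ 2) - W * U ^ 2 ≤ W * (H^2/4 * W^2) := by
      have h1 : W ^ 2 * (∑ i, w i * u i ^ 2) ≤ W^2 * (H * U) :=
        mul_le_mul_of_nonneg_left hu2 (sq_nonneg W)
      have h2 : U*(H*W) - U^2 ≤ H^2*W^2/4 := by nlinarith [sq_nonneg (2*U - H*W)]
      have h3 : W*(U*(H*W) - U^2) ≤ W*(H^2*W^2/4) := mul_le_mul_of_nonneg_left h2 hW.le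
      have e : W^2*(H*U) - W*U^2 = W*(U*(H*W)-U^2) := by ring
      have e2 : W * (H^2/4 * W^2) = W*(H^2*W^2/4) := by ring
      linarith
    have bv : W ^ 2 * (∑ i, w i * v i ^ 2) - W * V ^ 2 ≤ W * (H^2/4 * W^2) := by
      have h1 : W ^ 2 * (∑ i, w i * v i ^ 2) ≤ W^2 * (H * V) :=
        mul_le_mul_of_nonneg_left hv2 (sq_nonneg W)
      have h2 : V*(H*W) - V^2 ≤ H^2*W^2/4 := by nlinarith [sq_nonneg (2*V - H*W)]
      have h3 : W*(V*(H*W) - V^2) ≤ W*(H^2*W^2/4) := mul_le_mul_of_nonneg_left h2 hW.le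
      have e : W^2*(H*V) - W*V^2 = W*(V*(H*W)-V^2) := by ring
      have e2 : W * (H^2/4 * W^2) = W*(H^2*W^2/4) := by ring
      linarith
    calc W * (W * Q - U * V) = W ^ 2 * Q - W * U * V := by ring
      _ = ∑ i, w i * (W * u i - U) * (W * v i - V) := id1.symm
      _ ≤ (1/2) * (∑ i, w i * (W * u i - U) ^ 2) + (1/2) * (∑ i, w i * (W * v i - V) ^ 2) := ptw
      _ = (1/2) * (W ^ 2 * (∑ i, w i * u i ^ 2) - W * U ^ 2)
          + (1/2) * (W ^ 2 * (∑ i, w i * v i ^ 2) - W * V ^ 2) := by rw [idu, idv]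
      _ ≤ W * (H^2/4 * W^2) := by linarith
  have := (mul_le_mul_iff_right₀ hW).1 key
  linarith

set_option maxHeartbeats 1000000 in
/-- Tilt-drift: exponentially reweighting by `e^{-ηv}` moves the mean of `u`
down by at most `ηH²/4`. -/
lemma drift [Nonempty ι] (c u v : ι → ℝ) (H η : ℝ) (hη : 0 ≤ η)
    (hc : ∀ i, 0 < c i)
    (hu : ∀ i, u i ∈ Set.Icc (0:ℝ) H) (hv : ∀ i, v i ∈ Set.Icc (0:ℝ) H) :
    (∑ i, c i * u i) / (∑ i, c i)
      ≤ (∑ i, c i * Real.exp (-η * v i) * u i) / (∑ i, c i * Real.exp (-η * v i))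
        + η * (H ^ 2 / 4) := by
  set den : ℝ → ℝ := fun β => ∑ i, c i * Real.exp (-β * v i) with hden_def
  set num : ℝ → ℝ := fun β => ∑ i, c i * Real.exp (-β * v i) * u i with hnum_def
  have hden_pos : ∀ β, 0 < den β :=
    fun β => Finset.sum_pos (fun i _ => mul_pos (hc i) (Real.exp_pos _)) univ_nonempty
  have hd_den : ∀ β, HasDerivAt den (∑ i, c i * (Real.exp (-β * v i) * (-1 * v i))) β := by
    intro β
    apply HasDerivAt.fun_sum
    intro i _
    exact (((hasDerivAt_id β).neg.mul_const (v i)).exp).const_mul (c i)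
  have hd_num : ∀ β, HasDerivAt num
      (∑ i, c i * (Real.exp (-β * v i) * (-1 * v i)) * u i) β := by
    intro β
    apply HasDerivAt.fun_sum
    intro i _
    exact ((((hasDerivAt_id β).neg.mul_const (v i)).exp).const_mul (c i)).mul_const (u i)
  set F : ℝ → ℝ := fun β => num β / den β + β * (H ^ 2 / 4) with hF_def
  have hd_F : ∀ β, HasDerivAt F
      (((∑ i, c i * (Real.exp (-β * v i) * (-1 * v i)) * u i) * den β
        - num β * (∑ i, c i * (Real.exp (-β * v i) * (-1 * v i)))) / den β ^ 2
        + 1 * (H ^ 2 / 4)) β := by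
    intro β
    exact ((hd_num β).div (hd_den β) (hden_pos β).ne').add ((hasDerivAt_id β).mul_const _)
  have hd_nonneg : ∀ β,
      0 ≤ ((∑ i, c i * (Real.exp (-β * v i) * (-1 * v i)) * u i) * den β
        - num β * (∑ i, c i * (Real.exp (-β * v i) * (-1 * v i)))) / den β ^ 2
        + 1 * (H ^ 2 / 4) := by
    intro β
    set wβ : ι → ℝ := fun i => c i * Real.exp (-β * v i) with hwβ
    have hw0 : ∀ i, 0 ≤ wβ i := fun i => (mul_pos (hc i) (Real.exp_pos _)).le
    have hW : 0 < ∑ i, wβ i := hden_pos β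
    have hcov := cov_le wβ u v H hw0 hW hu hv
    have e1 : (∑ i, c i * (Real.exp (-β * v i) * (-1 * v i)) * u i)
        = -∑ i, wβ i * u i * v i := by
      rw [← Finset.sum_neg_distrib]
      exact Finset.sum_congr rfl fun i _ => by simp [hwβ]; ring
    have e2 : (∑ i, c i * (Real.exp (-β * v i) * (-1 * v i)))
        = -∑ i, wβ i * v i := by
      rw [← Finset.sum_neg_distrib]
      exact Finset.sum_congr rfl fun i _ => by simp [hwβ]; ring
    have e3 : num β = ∑ i, wβ i * u i := rfl
    have e4 : den β = ∑ i, wβ i := rfl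
    rw [e1, e2, e3, e4]
    have key : -(H^2/4) * (∑ i, wβ i)^2
        ≤ (-∑ i, wβ i * u i * v i) * (∑ i, wβ i)
          - (∑ i, wβ i * u i) * (-∑ i, wβ i * v i) := by
      nlinarith [hcov]
    have : -(H^2/4) ≤ ((-∑ i, wβ i * u i * v i) * (∑ i, wβ i)
          - (∑ i, wβ i * u i) * (-∑ i, wβ i * v i)) / (∑ i, wβ i) ^ 2 := by
      rw [le_div_iff₀ (pow_pos hW 2)]
      linarith
    linarith
  have hmono : Monotone F :=
    monotone_of_deriv_nonneg (fun β => (hd_F β).differentiableAt)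
      (fun β => by rw [(hd_F β).deriv]; exact hd_nonneg β)
  have h01 := hmono hη
  have hF0 : F 0 = (∑ i, c i * u i) / (∑ i, c i) := by
    simp [hF_def, hnum_def, hden_def]
  have hFη : F η = (∑ i, c i * Real.exp (-η * v i) * u i)
      / (∑ i, c i * Real.exp (-η * v i)) + η * (H ^ 2 / 4) := rfl
  rw [hF0, hFη] at h01
  exact h01

set_option maxHeartbeats 1000000 in
/-- Hoeffding-type bound for the log moment generating function. -/
lemma hoeff [Nonempty ι] (c v : ι → ℝ) (H η : ℝ) (hη : 0 ≤ η)
    (hc : ∀ i, 0 < c i) (hv : ∀ i, v i ∈ Set.Icc (0:ℝ) H) :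
    Real.log ((∑ i, c i * Real.exp (-η * v i)) / ∑ i, c i)
      ≤ -η * ((∑ i, c i * v i) / ∑ i, c i) + η ^ 2 * H ^ 2 / 8 := by
  set den : ℝ → ℝ := fun β => ∑ i, c i * Real.exp (-β * v i) with hden_def
  have hden_pos : ∀ β, 0 < den β :=
    fun β => Finset.sum_pos (fun i _ => mul_pos (hc i) (Real.exp_pos _)) univ_nonempty
  have hc_pos : 0 < ∑ i, c i := Finset.sum_pos (fun i _ => hc i) univ_nonempty
  set M : ℝ := (∑ i, c i * v i) / ∑ i, c i with hM
  set h : ℝ → ℝ := fun β => Real.log (den β) + β * M - β ^ 2 * (H ^ 2 / 8) with hh_def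
  have hd_den : ∀ β, HasDerivAt den (∑ i, c i * (Real.exp (-β * v i) * (-1 * v i))) β := by
    intro β
    apply HasDerivAt.fun_sum
    intro i _
    exact (((hasDerivAt_id β).neg.mul_const (v i)).exp).const_mul (c i)
  have hd_h : ∀ β, HasDerivAt h
      ((∑ i, c i * (Real.exp (-β * v i) * (-1 * v i))) / den β + 1 * M
        - (2 : ℕ) * β ^ 1 * (H ^ 2 / 8)) β := by
    intro β
    exact (((hd_den β).log (hden_pos β).ne').add
      ((hasDerivAt_id β).mul_const M)).sub ((hasDerivAt_pow 2 β).mul_const _)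
  have hd_nonpos : ∀ β, 0 ≤ β →
      (∑ i, c i * (Real.exp (-β * v i) * (-1 * v i))) / den β + 1 * M
        - (2 : ℕ) * β ^ 1 * (H ^ 2 / 8) ≤ 0 := by
    intro β hβ
    have hdr := drift c v v H β hβ hc hv hv
    have e1 : (∑ i, c i * (Real.exp (-β * v i) * (-1 * v i)))
        = -∑ i, c i * Real.exp (-β * v i) * v i := by
      rw [← Finset.sum_neg_distrib]
      exact Finset.sum_congr rfl fun i _ => by ring
    rw [e1]
    have e2 : den β = ∑ i, c i * Real.exp (-β * v i) := rfl
    rw [e2, neg_div]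
    have : (2 : ℕ) * β ^ 1 * (H ^ 2 / 8) = β * (H ^ 2 / 4) := by push_cast; ring
    rw [this]
    rw [hM]
    linarith
  have hanti : AntitoneOn h (Set.Icc 0 η) := by
    apply antitoneOn_of_deriv_nonpos (convex_Icc 0 η)
    · exact Continuous.continuousOn (by
        have : ∀ β, HasDerivAt h _ β := hd_h
        exact (Differentiable.continuous (fun β => (hd_h β).differentiableAt)))
    · intro x hx
      exact (hd_h x).differentiableAt.differentiableWithinAt
    · intro x hx
      rw [interior_Icc] at hx
      rw [(hd_h x).deriv]
      exact hd_nonpos x hx.1.le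
  have hle := hanti (Set.mem_Icc.2 ⟨le_refl 0, hη⟩) (Set.mem_Icc.2 ⟨hη, le_refl η⟩) hη
  have h0 : h 0 = Real.log (∑ i, c i) := by simp [hh_def, hden_def]
  have hηval : h η = Real.log (den η) + η * M - η ^ 2 * (H ^ 2 / 8) := rfl
  rw [h0, hηval] at hle
  rw [Real.log_div (hden_pos η).ne' hc_pos.ne']
  linarith

/-- Normalization of the Fixed Share hidden Markov model. -/
lemma markov_sum (N : ℕ) (hN : 0 < N) :
    ∀ T : ℕ, 0 < T → ∀ f : ℕ → Fin N → Fin N → ℝ,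
      (∀ k (m : Fin N), ∑ n, f k n m = 1) →
      ∑ σ : Fin T → Fin N, (1 / (N:ℝ)) *
        ∏ i ∈ Finset.univ.filter (fun i : Fin T => 1 ≤ i.val),
          f i.val (σ i) (σ ⟨i.val - 1, Nat.lt_of_le_of_lt (Nat.sub_le _ _) i.isLt⟩) = 1 := by
  intro T hT
  induction T, hT using Nat.le_induction with
  | base =>
    intro f _
    have : (Finset.univ.filter (fun i : Fin 1 => 1 ≤ i.val)) = ∅ := by
      apply Finset.filter_false_of_mem
      intro i _
      omega
    simp only [this, Finset.prod_empty, mul_one, Finset.sum_const, Finset.card_univ]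
    rw [show Fintype.card (Fin 1 → Fin N) = N ^ 1 by simp]
    have : (N:ℝ) ≠ 0 := Nat.cast_ne_zero.2 hN.ne'
    rw [pow_one, nsmul_eq_mul, mul_one_div_cancel this]
  | succ T hT ih =>
    intro f hf
    have hrec := ih f hf
    -- reindex the sum by `Fin.snoc`
    rw [← (Fin.snocEquiv (fun _ : Fin (T+1) => Fin N)).sum_comp]
    rw [Fintype.sum_prod_type]
    rw [Finset.sum_comm]
    have main : ∀ τ : Fin T → Fin N, ∀ x : Fin N,
        (1 / (N:ℝ)) * ∏ i ∈ Finset.univ.filter (fun i : Fin (T+1) => 1 ≤ i.val),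
          f i.val (Fin.snocEquiv (fun _ => Fin N) (x, τ) i)
            (Fin.snocEquiv (fun _ => Fin N) (x, τ)
              ⟨i.val - 1, Nat.lt_of_le_of_lt (Nat.sub_le _ _) i.isLt⟩)
        = (1 / (N:ℝ)) * ((∏ i ∈ Finset.univ.filter (fun i : Fin T => 1 ≤ i.val),
            f i.val (τ i) (τ ⟨i.val - 1, Nat.lt_of_le_of_lt (Nat.sub_le _ _) i.isLt⟩))
          * f T x (τ ⟨T - 1, by omega⟩)) := by
      intro τ x
      congr 1
      rw [Finset.prod_filter, Finset.prod_filter, Fin.prod_univ_castSucc]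
      congr 1
      · apply Finset.prod_congr rfl
        intro i _
        by_cases hi : 1 ≤ i.val
        · have hc1 : 1 ≤ (Fin.castSucc i).val := hi
          rw [if_pos hc1, if_pos hi]
          have e1 : Fin.snocEquiv (fun _ : Fin (T+1) => Fin N) (x, τ) (Fin.castSucc i) = τ i := by
            simp [Fin.snocEquiv]
          have e2 : (⟨(Fin.castSucc i).val - 1,
              Nat.lt_of_le_of_lt (Nat.sub_le _ _) (Fin.castSucc i).isLt⟩ :
              Fin (T+1)) = Fin.castSucc ⟨i.val - 1, Nat.lt_of_le_of_lt (Nat.sub_le _ _) i.isLt⟩ :=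
            Fin.ext rfl
          have e3 : ∀ j : Fin T, Fin.snocEquiv (fun _ : Fin (T+1) => Fin N) (x, τ)
              (Fin.castSucc j) = τ j := fun j => by
            rw [Fin.snocEquiv_apply]
            exact @Fin.snoc_castSucc T (fun _ => Fin N) x τ j
          rw [e1, e2, e3]
          rfl
        · have hc1 : ¬ 1 ≤ (Fin.castSucc i).val := hi
          rw [if_neg hc1, if_neg hi]
      · have hlastc : 1 ≤ (Fin.last T).val := hT
        rw [if_pos hlastc]
        have e1 : Fin.snocEquiv (fun _ : Fin (T+1) => Fin N) (x, τ) (Fin.last T) = x := by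
          simp [Fin.snocEquiv]
        have e2 : (⟨(Fin.last T).val - 1,
            Nat.lt_of_le_of_lt (Nat.sub_le _ _) (Fin.last T).isLt⟩ : Fin (T+1))
            = Fin.castSucc ⟨T - 1, by omega⟩ := Fin.ext rfl
        have e3 : ∀ j : Fin T, Fin.snocEquiv (fun _ : Fin (T+1) => Fin N) (x, τ)
            (Fin.castSucc j) = τ j := fun j => by
          rw [Fin.snocEquiv_apply]
          exact @Fin.snoc_castSucc T (fun _ => Fin N) x τ j
        rw [e1, e2, e3]
        rfl
    calc ∑ τ : Fin T → Fin N, ∑ x : Fin N,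
          (1 / (N:ℝ)) * ∏ i ∈ Finset.univ.filter (fun i : Fin (T+1) => 1 ≤ i.val),
            f i.val (Fin.snocEquiv (fun _ => Fin N) (x, τ) i)
              (Fin.snocEquiv (fun _ => Fin N) (x, τ)
                ⟨i.val - 1, Nat.lt_of_le_of_lt (Nat.sub_le _ _) i.isLt⟩)
        = ∑ τ : Fin T → Fin N, (1 / (N:ℝ)) *
            ∏ i ∈ Finset.univ.filter (fun i : Fin T => 1 ≤ i.val),
              f i.val (τ i) (τ ⟨i.val - 1, Nat.lt_of_le_of_lt (Nat.sub_le _ _) i.isLt⟩) := by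
          apply Finset.sum_congr rfl
          intro τ _
          rw [Finset.sum_congr rfl (fun x _ => main τ x)]
          rw [← Finset.mul_sum, ← Finset.mul_sum, hf T (τ ⟨T - 1, by omega⟩), mul_one]
      _ = 1 := hrec

lemma tele_range : ∀ T : ℕ, 0 < T →
    ∏ i ∈ Finset.range T, (if 1 ≤ i then (i:ℝ)/(i+1) else 1) = 1/T := by
  intro T
  induction T with
  | zero => omega
  | succ T ih =>
    intro _
    rcases Nat.eq_zero_or_pos T with h0 | hpos
    · subst h0; simp
    · rw [Finset.prod_range_succ, ih hpos, if_pos (show 1 ≤ T from hpos)]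
      have h1 : (T:ℝ) ≠ 0 := Nat.cast_ne_zero.2 hpos.ne'
      have h2 : (T:ℝ) + 1 ≠ 0 := by positivity
      field_simp
      exact Nat.cast_succ T

lemma tele_fin (T : ℕ) (hT : 0 < T) :
    ∏ i ∈ (Finset.univ : Finset (Fin T)).filter (fun i => 1 ≤ i.val),
      ((i.val : ℝ)/(i.val + 1)) = 1/T := by
  rw [Finset.prod_filter]
  rw [Fin.prod_univ_eq_prod_range (fun k => if 1 ≤ k then (k:ℝ)/(k+1) else 1) T]
  exact tele_range T hT

set_option maxHeartbeats 1000000 in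
lemma prior_bound (N T : ℕ) (hN : 1 ≤ N) (hT : 0 < T) (ν : Fin T → Fin N) (K : ℕ)
    (hK : K = (Finset.univ.filter (fun t : Fin T => 1 ≤ t.val ∧
        ν t ≠ ν ⟨t.val - 1, Nat.lt_of_le_of_lt (Nat.sub_le _ _) t.isLt⟩)).card) :
    (1 / ((N:ℝ) * T)) ^ (K+1) ≤ (1 / (N : ℝ)) *
      ∏ i ∈ Finset.univ.filter (fun i : Fin T => 1 ≤ i.val),
        ((1 / ((i : ℕ) + 1 : ℝ)) * (1 / (N : ℝ))
          + (1 - 1 / ((i : ℕ) + 1 : ℝ)) *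
            (if ν i = ν ⟨i.val - 1, Nat.lt_of_le_of_lt (Nat.sub_le _ _) i.isLt⟩
              then 1 else 0)) := by
  have hN0 : (0:ℝ) < N := by exact_mod_cast hN
  have hT0 : (0:ℝ) < T := by exact_mod_cast hT
  set G : Finset (Fin T) := Finset.univ.filter (fun i : Fin T => 1 ≤ i.val) with hG
  have hip : ∀ i : Fin T, (0:ℝ) < ((i:ℕ):ℝ) + 1 := fun i => by positivity
  have hg_nonneg : ∀ i : Fin T,
      (0:ℝ) ≤ (if ν i = ν ⟨i.val - 1, Nat.lt_of_le_of_lt (Nat.sub_le _ _) i.isLt⟩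
        then ((i:ℕ):ℝ)/((i:ℕ)+1) else 1/((N:ℝ)*T)) := by
    intro i
    split_ifs
    · positivity
    · positivity
  have hfac_ge : ∀ i : Fin T,
      (if ν i = ν ⟨i.val - 1, Nat.lt_of_le_of_lt (Nat.sub_le _ _) i.isLt⟩
        then ((i:ℕ):ℝ)/((i:ℕ)+1) else 1/((N:ℝ)*T))
      ≤ (1 / ((i : ℕ) + 1 : ℝ)) * (1 / (N : ℝ))
          + (1 - 1 / ((i : ℕ) + 1 : ℝ)) *
            (if ν i = ν ⟨i.val - 1, Nat.lt_of_le_of_lt (Nat.sub_le _ _) i.isLt⟩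
              then 1 else 0) := by
    intro i
    by_cases h : ν i = ν ⟨i.val - 1, Nat.lt_of_le_of_lt (Nat.sub_le _ _) i.isLt⟩
    · rw [if_pos h, if_pos h]
      have e : (1:ℝ) - 1/(((i:ℕ):ℝ)+1) = ((i:ℕ):ℝ)/(((i:ℕ):ℝ)+1) := by
        field_simp
        ring
      rw [mul_one, e]
      have : (0:ℝ) ≤ 1 / (((i:ℕ):ℝ)+1) * (1/(N:ℝ)) := by positivity
      linarith
    · rw [if_neg h, if_neg h, mul_zero, add_zero]
      have hi : ((i:ℕ):ℝ) + 1 ≤ (T:ℝ) := by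
        have := i.isLt
        exact_mod_cast Nat.succ_le_of_lt this
      have h1 : (0:ℝ) < (((i:ℕ):ℝ)+1) * N := by positivity
      have h2 : (((i:ℕ):ℝ)+1) * N ≤ (N:ℝ) * T := by
        rw [mul_comm ((N:ℝ)) (T:ℝ)]
        exact mul_le_mul_of_nonneg_right hi hN0.le
      calc 1/((N:ℝ)*T) ≤ 1/((((i:ℕ):ℝ)+1) * N) := one_div_le_one_div_of_le h1 h2
        _ = 1 / (((i:ℕ):ℝ)+1) * (1/(N:ℝ)) := by rw [one_div_mul_one_div]
  have step2 : (∏ i ∈ G,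
        (if ν i = ν ⟨i.val - 1, Nat.lt_of_le_of_lt (Nat.sub_le _ _) i.isLt⟩
          then ((i:ℕ):ℝ)/((i:ℕ)+1) else 1/((N:ℝ)*T)))
      ≤ ∏ i ∈ G, ((1 / ((i : ℕ) + 1 : ℝ)) * (1 / (N : ℝ))
          + (1 - 1 / ((i : ℕ) + 1 : ℝ)) *
            (if ν i = ν ⟨i.val - 1, Nat.lt_of_le_of_lt (Nat.sub_le _ _) i.isLt⟩
              then 1 else 0)) :=
    Finset.prod_le_prod (fun i _ => hg_nonneg i) (fun i _ => hfac_ge i)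
  have split : (∏ i ∈ G,
        (if ν i = ν ⟨i.val - 1, Nat.lt_of_le_of_lt (Nat.sub_le _ _) i.isLt⟩
          then ((i:ℕ):ℝ)/((i:ℕ)+1) else 1/((N:ℝ)*T)))
      = (∏ i ∈ G.filter (fun i =>
            ν i = ν ⟨i.val - 1, Nat.lt_of_le_of_lt (Nat.sub_le _ _) i.isLt⟩),
          ((i:ℕ):ℝ)/((i:ℕ)+1)) * (1/((N:ℝ)*T))^K := by
    rw [← Finset.prod_filter_mul_prod_filter_not G
      (fun i => ν i = ν ⟨i.val - 1, Nat.lt_of_le_of_lt (Nat.sub_le _ _) i.isLt⟩)]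
    congr 1
    · exact Finset.prod_congr rfl fun i hi => if_pos (Finset.mem_filter.1 hi).2
    · rw [Finset.prod_congr rfl (fun i hi => show _ = 1/((N:ℝ)*T) from
        if_neg (Finset.mem_filter.1 hi).2)]
      rw [Finset.prod_const]
      congr 1
      rw [hK, hG, Finset.filter_filter]
  have onemT : (1:ℝ)/T ≤ ∏ i ∈ G.filter (fun i =>
        ν i = ν ⟨i.val - 1, Nat.lt_of_le_of_lt (Nat.sub_le _ _) i.isLt⟩),
      ((i:ℕ):ℝ)/((i:ℕ)+1) := by
    have htele := tele_fin T hT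
    have hsplit2 := (Finset.prod_filter_mul_prod_filter_not G
      (fun i => ν i = ν ⟨i.val - 1, Nat.lt_of_le_of_lt (Nat.sub_le _ _) i.isLt⟩)
      (fun i => ((i:ℕ):ℝ)/((i:ℕ)+1))).symm
    have hle1 : (∏ i ∈ G.filter (fun i =>
          ¬ ν i = ν ⟨i.val - 1, Nat.lt_of_le_of_lt (Nat.sub_le _ _) i.isLt⟩),
        (((i:ℕ):ℝ)/((i:ℕ)+1))) ≤ 1 :=
      Finset.prod_le_one (fun i _ => by positivity)
        (fun i _ => by rw [div_le_one (hip i)]; linarith)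
    have hnn : (0:ℝ) ≤ ∏ i ∈ G.filter (fun i =>
          ν i = ν ⟨i.val - 1, Nat.lt_of_le_of_lt (Nat.sub_le _ _) i.isLt⟩),
        ((i:ℕ):ℝ)/((i:ℕ)+1) :=
      Finset.prod_nonneg fun i _ => by positivity
    calc (1:ℝ)/T = ∏ i ∈ G, (((i:ℕ):ℝ)/((i:ℕ)+1)) := htele.symm
      _ = _ := hsplit2
      _ ≤ _ * 1 := mul_le_mul_of_nonneg_left hle1 hnn
      _ = _ := mul_one _
  have hpowpos : (0:ℝ) < (1/((N:ℝ)*T))^K := by positivity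
  calc (1 / ((N:ℝ) * T)) ^ (K+1)
      = (1/(N:ℝ)) * ((1/(T:ℝ)) * (1/((N:ℝ)*T))^K) := by
        rw [pow_succ]; field_simp
    _ ≤ (1/(N:ℝ)) * ((∏ i ∈ G.filter (fun i =>
            ν i = ν ⟨i.val - 1, Nat.lt_of_le_of_lt (Nat.sub_le _ _) i.isLt⟩),
          ((i:ℕ):ℝ)/((i:ℕ)+1)) * (1/((N:ℝ)*T))^K) := by
        apply mul_le_mul_of_nonneg_left _ (by positivity)
        exact mul_le_mul_of_nonneg_right onemT hpowpos.le
    _ = (1/(N:ℝ)) * ∏ i ∈ G,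
        (if ν i = ν ⟨i.val - 1, Nat.lt_of_le_of_lt (Nat.sub_le _ _) i.isLt⟩
          then ((i:ℕ):ℝ)/((i:ℕ)+1) else 1/((N:ℝ)*T)) := by rw [split]
    _ ≤ _ := mul_le_mul_of_nonneg_left step2 (by positivity)

set_option maxHeartbeats 2000000



/-- Regret bound for delayed Fixed Share (Eq. (18) of the paper). Time steps are
indexed by `Fin T` (index `i` is the paper's step `i+1`); the Fixed Share hidden
Markov model uses the uniform prior `1/N` and switch probabilities `α_t = 1/t`
(i.e. `1/(i+1)` at index `i`). The weights are the Bayesian posteriors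
`w t n = p(n_t = n | revealed losses 𝒟_{t-1})` with
`𝒟_{t-1} = {τ : (τ+1) + D τ ≤ t}`. Then for any comparison sequence `ν` with `K`
switches, the regret is at most
`(K+1)(ln N + ln T)/η + η H² T/8 + (η H²/4) Σ_t D t`. -/
theorem stmt_16 (N T : ℕ) (hN : 1 ≤ N) (hT : 0 < T) (η H : ℝ)
    (hη : 0 < η) (hH : 0 < H)
    (l : Fin T → Fin N → ℝ) (hl : ∀ t n, l t n ∈ Set.Icc (0 : ℝ) H)
    (D : Fin T → ℕ) (hD : ∀ τ : Fin T, (τ : ℕ) + 1 + D τ ≤ T)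
    (P : (Fin T → Fin N) → ℝ)
    (hP : ∀ σ, P σ = (1 / (N : ℝ)) *
      ∏ i ∈ Finset.univ.filter (fun i : Fin T => 1 ≤ i.val),
        ((1 / ((i : ℕ) + 1 : ℝ)) * (1 / (N : ℝ))
          + (1 - 1 / ((i : ℕ) + 1 : ℝ)) *
            (if σ i = σ ⟨i.val - 1, Nat.lt_of_le_of_lt (Nat.sub_le _ _) i.isLt⟩
              then 1 else 0)))
    (w : Fin T → Fin N → ℝ)
    (hw : ∀ t n, w t n =
      (∑ σ ∈ Finset.univ.filter (fun σ : Fin T → Fin N => σ t = n),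
          P σ * ∏ τ ∈ Finset.univ.filter
              (fun τ : Fin T => (τ : ℕ) + 1 + D τ ≤ (t : ℕ)),
            Real.exp (-η * l τ (σ τ))) /
      (∑ σ : Fin T → Fin N,
          P σ * ∏ τ ∈ Finset.univ.filter
              (fun τ : Fin T => (τ : ℕ) + 1 + D τ ≤ (t : ℕ)),
            Real.exp (-η * l τ (σ τ))))
    (ν : Fin T → Fin N) (K : ℕ)
    (hK : K = (Finset.univ.filter (fun t : Fin T => 1 ≤ t.val ∧
        ν t ≠ ν ⟨t.val - 1, Nat.lt_of_le_of_lt (Nat.sub_le _ _) t.isLt⟩)).card) :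
    (∑ t : Fin T, ∑ n, w t n * l t n) - ∑ t : Fin T, l t (ν t)
      ≤ (K + 1 : ℝ) * (Real.log N + Real.log T) / η
        + η * H ^ 2 * T / 8
        + η * H ^ 2 / 4 * ∑ t : Fin T, (D t : ℝ) := by
  classical
  have hN0 : (0:ℝ) < N := by exact_mod_cast hN
  have hT0 : (0:ℝ) < T := by exact_mod_cast hT
  haveI : Nonempty (Fin N) := ⟨⟨0, hN⟩⟩
  -- positivity of the prior
  have hPpos : ∀ σ, 0 < P σ := by
    intro σ
    rw [hP σ]
    apply mul_pos (by positivity)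
    apply Finset.prod_pos
    intro i _
    have hip : (0:ℝ) < ((i:ℕ):ℝ) + 1 := by positivity
    have h1 : (0:ℝ) < 1/(((i:ℕ):ℝ)+1) * (1/(N:ℝ)) := by positivity
    have h2 : (0:ℝ) ≤ (1 - 1/(((i:ℕ):ℝ)+1)) *
        (if σ i = σ ⟨i.val - 1, Nat.lt_of_le_of_lt (Nat.sub_le _ _) i.isLt⟩
          then (1:ℝ) else 0) := by
      apply mul_nonneg
      · have : 1/(((i:ℕ):ℝ)+1) ≤ 1 := by
          rw [div_le_one hip]
          have : (0:ℝ) ≤ ((i:ℕ):ℝ) := Nat.cast_nonneg _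
          linarith
        linarith
      · split_ifs <;> norm_num
    linarith
  -- local definitions
  set A : Fin T → Finset (Fin T) :=
    fun t => Finset.univ.filter (fun τ : Fin T => (τ:ℕ)+1+D τ ≤ (t:ℕ)) with hA
  set SS : ℕ → Finset (Fin T) :=
    fun k => Finset.univ.filter (fun τ : Fin T => (τ:ℕ) < k) with hSSdef
  set ce : Finset (Fin T) → (Fin T → Fin N) → ℝ :=
    fun S σ => P σ * ∏ τ ∈ S, Real.exp (-η * l τ (σ τ)) with hce
  set Zf : Finset (Fin T) → ℝ := fun S => ∑ σ, ce S σ with hZf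
  have hcepos : ∀ S σ, 0 < ce S σ :=
    fun S σ => mul_pos (hPpos σ) (Finset.prod_pos fun τ _ => Real.exp_pos _)
  have hZpos : ∀ S, 0 < Zf S :=
    fun S => Finset.sum_pos (fun σ _ => hcepos S σ) Finset.univ_nonempty
  -- Step 1: the algorithm's expected loss is a posterior expectation
  have F1 : ∀ t : Fin T, (∑ n, w t n * l t n)
      = (∑ σ, ce (A t) σ * l t (σ t)) / Zf (A t) := by
    intro t
    have hterm : ∀ n : Fin N, w t n * l t n
        = (∑ σ ∈ Finset.univ.filter (fun σ : Fin T → Fin N => σ t = n),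
            ce (A t) σ * l t (σ t)) / Zf (A t) := by
      intro n
      rw [hw t n, div_mul_eq_mul_div]
      congr 1
      rw [Finset.sum_mul]
      apply Finset.sum_congr rfl
      intro σ hσ
      have hst : σ t = n := by
        have := Finset.mem_filter.1 hσ
        exact this.2
      rw [← hst]
    rw [Finset.sum_congr rfl (fun n _ => hterm n), ← Finset.sum_div]
    congr 1
    exact Finset.sum_fiberwise Finset.univ (fun σ => σ t)
      (fun σ => ce (A t) σ * l t (σ t))
  -- Step 2: multi-step drift bound
  have drift_multi : ∀ (k : ℕ) (Sa Sb : Finset (Fin T)), Sa ⊆ Sb → (Sb \ Sa).card = k →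
      ∀ u : (Fin T → Fin N) → ℝ, (∀ σ, u σ ∈ Set.Icc (0:ℝ) H) →
      (∑ σ, ce Sa σ * u σ)/Zf Sa ≤ (∑ σ, ce Sb σ * u σ)/Zf Sb + η * (H^2/4) * k := by
    intro k
    induction k with
    | zero =>
      intro Sa Sb hsub hcard u hu
      have hempty : Sb \ Sa = ∅ := Finset.card_eq_zero.1 hcard
      have hba : Sb ⊆ Sa := by
        intro x hx
        by_contra hxa
        have : x ∈ Sb \ Sa := Finset.mem_sdiff.2 ⟨hx, hxa⟩
        rw [hempty] at this
        exact absurd this (Finset.notMem_empty x)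
      have : Sb = Sa := Finset.Subset.antisymm hba hsub
      rw [this]
      simp
    | succ k ih =>
      intro Sa Sb hsub hcard u hu
      have hne : (Sb \ Sa).Nonempty := Finset.card_pos.1 (by omega)
      obtain ⟨τ0, hτ0⟩ := hne
      have hτb : τ0 ∈ Sb := (Finset.mem_sdiff.1 hτ0).1
      have hτa : τ0 ∉ Sa := (Finset.mem_sdiff.1 hτ0).2
      have hsub' : Sa ⊆ Sb.erase τ0 := fun x hx =>
        Finset.mem_erase.2 ⟨fun he => hτa (he ▸ hx), hsub hx⟩
      have hcard' : ((Sb.erase τ0) \ Sa).card = k := by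
        have he : (Sb.erase τ0) \ Sa = (Sb \ Sa).erase τ0 := by
          ext x
          simp only [Finset.mem_erase, Finset.mem_sdiff]
          tauto
        rw [he, Finset.card_erase_of_mem hτ0, hcard]
        omega
      have hτnot : τ0 ∉ Sb.erase τ0 := Finset.notMem_erase _ _
      have hins : Sb = insert τ0 (Sb.erase τ0) := (Finset.insert_erase hτb).symm
      have estep : ∀ σ, ce Sb σ = ce (Sb.erase τ0) σ * Real.exp (-η * l τ0 (σ τ0)) := by
        intro σ
        show P σ * ∏ τ ∈ Sb, Real.exp (-η * l τ (σ τ))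
          = (P σ * ∏ τ ∈ Sb.erase τ0, Real.exp (-η * l τ (σ τ)))
            * Real.exp (-η * l τ0 (σ τ0))
        conv_lhs => rw [hins]
        rw [Finset.prod_insert hτnot]
        ring
      have hdr := drift (ce (Sb.erase τ0)) u (fun σ => l τ0 (σ τ0)) H η hη.le
        (fun σ => hcepos _ σ) hu (fun σ => hl τ0 (σ τ0))
      have e1 : (∑ σ, ce (Sb.erase τ0) σ * Real.exp (-η * l τ0 (σ τ0)) * u σ)
          = ∑ σ, ce Sb σ * u σ :=
        Finset.sum_congr rfl fun σ _ => by rw [estep σ]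
      have e2 : (∑ σ, ce (Sb.erase τ0) σ * Real.exp (-η * l τ0 (σ τ0)))
          = Zf Sb :=
        Finset.sum_congr rfl fun σ _ => (estep σ).symm
      rw [e1, e2] at hdr
      have hih := ih Sa (Sb.erase τ0) hsub' hcard' u hu
      have : Zf (Sb.erase τ0) = ∑ σ, ce (Sb.erase τ0) σ := rfl
      rw [this] at hih
      push_cast
      have hdr' : (∑ σ, ce (Sb.erase τ0) σ * u σ) / (∑ σ, ce (Sb.erase τ0) σ)
          ≤ (∑ σ, ce Sb σ * u σ) / Zf Sb + η * (H^2/4) := hdr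
      linarith
  -- Step 3: Hoeffding per-step bound at the full prefix
  have hZins : ∀ t : Fin T, Zf (SS ((t:ℕ)+1))
      = ∑ σ, ce (SS (t:ℕ)) σ * Real.exp (-η * l t (σ t)) := by
    intro t
    have hnotin : t ∉ SS (t:ℕ) := by simp [hSSdef]
    have hins : SS ((t:ℕ)+1) = insert t (SS (t:ℕ)) := by
      ext τ
      simp only [hSSdef, Finset.mem_filter, Finset.mem_univ, true_and, Finset.mem_insert]
      rw [Fin.ext_iff]
      omega
    rw [hins]
    apply Finset.sum_congr rfl
    intro σ _
    show P σ * ∏ τ ∈ insert t (SS (t:ℕ)), Real.exp (-η * l τ (σ τ))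
      = (P σ * ∏ τ ∈ SS (t:ℕ), Real.exp (-η * l τ (σ τ))) * Real.exp (-η * l t (σ t))
    rw [Finset.prod_insert hnotin]
    ring
  have F3 : ∀ t : Fin T, (∑ σ, ce (SS (t:ℕ)) σ * l t (σ t))/Zf (SS (t:ℕ))
      ≤ (Real.log (Zf (SS (t:ℕ))) - Real.log (Zf (SS ((t:ℕ)+1))))/η + η*H^2/8 := by
    intro t
    have hh := hoeff (ce (SS (t:ℕ))) (fun σ => l t (σ t)) H η hη.le
      (fun σ => hcepos _ σ) (fun σ => hl t (σ t))
    rw [← hZins t] at hh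
    have e2 : (∑ σ, ce (SS (t:ℕ)) σ) = Zf (SS (t:ℕ)) := rfl
    rw [e2, Real.log_div (hZpos _).ne' (hZpos _).ne'] at hh
    set X := (∑ σ, ce (SS (t:ℕ)) σ * l t (σ t))/Zf (SS (t:ℕ)) with hX
    have key : η * X ≤ (Real.log (Zf (SS (t:ℕ))) - Real.log (Zf (SS ((t:ℕ)+1))))
        + η^2*H^2/8 := by
      rw [hX, e2] at *
      nlinarith [hh]
    calc X = (η*X)/η := by field_simp
      _ ≤ ((Real.log (Zf (SS (t:ℕ))) - Real.log (Zf (SS ((t:ℕ)+1)))) + η^2*H^2/8)/η :=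
          (div_le_div_iff_of_pos_right hη).mpr key
      _ = (Real.log (Zf (SS (t:ℕ))) - Real.log (Zf (SS ((t:ℕ)+1))))/η + η*H^2/8 := by
          field_simp
  -- Step 2 applied to each round
  have hsubA : ∀ t : Fin T, A t ⊆ SS (t:ℕ) := by
    intro t τ hτ
    simp only [hA, Finset.mem_filter, Finset.mem_univ, true_and] at hτ
    simp only [hSSdef, Finset.mem_filter, Finset.mem_univ, true_and]
    omega
  have F2 : ∀ t : Fin T, (∑ σ, ce (A t) σ * l t (σ t))/Zf (A t)
      ≤ (∑ σ, ce (SS (t:ℕ)) σ * l t (σ t))/Zf (SS (t:ℕ))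
        + η * (H^2/4) * (((SS (t:ℕ) \ A t).card : ℕ) : ℝ) :=
    fun t => drift_multi ((SS (t:ℕ) \ A t).card) (A t) (SS (t:ℕ)) (hsubA t) rfl
      (fun σ => l t (σ t)) (fun σ => hl t (σ t))
  -- per-step combined bound
  have step : ∀ t : Fin T, (∑ n, w t n * l t n)
      ≤ (Real.log (Zf (SS (t:ℕ))) - Real.log (Zf (SS ((t:ℕ)+1))))/η + η*H^2/8
        + η * (H^2/4) * (((SS (t:ℕ) \ A t).card : ℕ) : ℝ) := by
    intro t
    rw [F1 t]
    have h2 := F2 t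
    have h3 := F3 t
    linarith
  -- telescoping
  have tel : (∑ t : Fin T,
      (Real.log (Zf (SS (t:ℕ))) - Real.log (Zf (SS ((t:ℕ)+1)))))
      = Real.log (Zf (SS 0)) - Real.log (Zf (SS T)) := by
    rw [Fin.sum_univ_eq_sum_range
      (fun k => Real.log (Zf (SS k)) - Real.log (Zf (SS (k+1)))) T]
    exact Finset.sum_range_sub' (fun k => Real.log (Zf (SS k))) T
  -- Z(∅) = 1
  have hrow : ∀ (k : ℕ) (m : Fin N),
      ∑ n : Fin N, ((1:ℝ)/((k:ℝ)+1) * (1/(N:ℝ))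
        + (1 - 1/((k:ℝ)+1)) * (if n = m then 1 else 0)) = 1 := by
    intro k m
    have hkne : ((k:ℝ)+1) ≠ 0 := by positivity
    have h1 : ∑ _n : Fin N, ((1:ℝ)/((k:ℝ)+1) * (1/(N:ℝ)))
        = (N:ℝ) * (1/((k:ℝ)+1) * (1/(N:ℝ))) := by
      rw [Finset.sum_const, Finset.card_univ, Fintype.card_fin, nsmul_eq_mul]
    have h2 : ∑ n : Fin N, ((1 - 1/((k:ℝ)+1)) * (if n = m then (1:ℝ) else 0))
        = (1 - 1/((k:ℝ)+1)) := by
      rw [← Finset.mul_sum]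
      have : ∑ n : Fin N, (if n = m then (1:ℝ) else 0) = 1 := by
        rw [Finset.sum_ite_eq' Finset.univ m (fun _ => (1:ℝ)),
          if_pos (Finset.mem_univ m)]
      rw [this, mul_one]
    rw [Finset.sum_add_distrib, h1, h2]
    field_simp
    ring
  have hsum1 : ∑ σ : Fin T → Fin N, P σ = 1 := by
    have hm := markov_sum N (by omega) T hT
      (fun k n m => (1:ℝ)/((k:ℝ)+1) * (1/(N:ℝ))
        + (1 - 1/((k:ℝ)+1)) * (if n = m then 1 else 0)) hrow
    rw [Finset.sum_congr rfl (fun σ _ => hP σ)]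
    simpa using hm
  have hSS0 : SS 0 = (∅ : Finset (Fin T)) := by
    ext τ
    simp [hSSdef]
  have hZ0 : Real.log (Zf (SS 0)) = 0 := by
    have : Zf (SS 0) = 1 := by
      rw [hSS0]
      calc Zf ∅ = ∑ σ : Fin T → Fin N, P σ := by
            apply Finset.sum_congr rfl
            intro σ _
            show P σ * ∏ τ ∈ (∅ : Finset (Fin T)), Real.exp (-η * l τ (σ τ)) = P σ
            rw [Finset.prod_empty, mul_one]
        _ = 1 := hsum1
    rw [this, Real.log_one]
  -- lower bound on Z(univ)
  have hZTlow : -Real.log (Zf (SS T)) ≤ -Real.log (P ν) + η * ∑ t : Fin T, l t (ν t) := by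
    have hin : SS T = (Finset.univ : Finset (Fin T)) := by
      ext τ
      simp [hSSdef, τ.isLt]
    have h1 : ce Finset.univ ν ≤ Zf Finset.univ :=
      Finset.single_le_sum (fun σ _ => (hcepos _ σ).le) (Finset.mem_univ ν)
    have h2 := Real.log_le_log (hcepos Finset.univ ν) h1
    have h3 : Real.log (ce Finset.univ ν)
        = Real.log (P ν) + ∑ t : Fin T, (-η * l t (ν t)) := by
      show Real.log (P ν * ∏ t ∈ Finset.univ, Real.exp (-η * l t (ν t))) = _
      rw [Real.log_mul (hPpos ν).ne' (Finset.prod_pos fun τ _ => Real.exp_pos _).ne',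
        Real.log_prod (fun τ _ => (Real.exp_pos _).ne')]
      congr 1
      exact Finset.sum_congr rfl fun t _ => Real.log_exp _
    have e : ∑ t : Fin T, (-η * l t (ν t)) = -(η * ∑ t : Fin T, l t (ν t)) := by
      rw [← Finset.mul_sum]
      ring
    rw [hin]
    rw [h3, e] at h2
    linarith
  -- prior bound
  have hPν : -Real.log (P ν) ≤ ((K:ℝ)+1) * (Real.log N + Real.log T) := by
    have hpr := prior_bound N T hN hT ν K hK
    rw [← hP ν] at hpr
    have h0 : (0:ℝ) < (1/((N:ℝ)*T))^(K+1) := by positivity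
    have h2 := Real.log_le_log h0 hpr
    have h3 : Real.log ((1/((N:ℝ)*T))^(K+1))
        = -(((K:ℝ)+1) * (Real.log N + Real.log T)) := by
      rw [Real.log_pow, one_div, Real.log_inv, Real.log_mul hN0.ne' hT0.ne']
      push_cast
      ring
    rw [h3] at h2
    linarith
  -- delay counting
  have dsum : ∑ t : Fin T, (((SS (t:ℕ) \ A t).card : ℕ) : ℝ) ≤ ∑ t : Fin T, (D t : ℝ) := by
    have hnat : ∑ t : Fin T, (SS (t:ℕ) \ A t).card ≤ ∑ t : Fin T, D t := by
      have e1 : ∀ t : Fin T, (SS (t:ℕ) \ A t).card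
          = ∑ τ : Fin T, if τ ∈ SS (t:ℕ) \ A t then 1 else 0 := by
        intro t
        have heq : SS (t:ℕ) \ A t = Finset.univ.filter (fun τ => τ ∈ SS (t:ℕ) \ A t) := by
          ext x
          simp
        conv_lhs => rw [heq]
        rw [Finset.card_filter]
      rw [Finset.sum_congr rfl (fun t _ => e1 t), Finset.sum_comm]
      apply Finset.sum_le_sum
      intro τ _
      rw [← Finset.card_filter]
      calc (Finset.univ.filter (fun t : Fin T => τ ∈ SS (t:ℕ) \ A t)).card
          ≤ (Finset.Ioo (τ:ℕ) ((τ:ℕ) + 1 + D τ)).card := by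
            refine Finset.card_le_card_of_injOn (fun t => (t:ℕ)) ?_ ?_
            · intro t ht
              simp only [Finset.mem_filter, Finset.mem_univ, true_and,
                Finset.mem_sdiff, hSSdef, hA, Finset.mem_coe] at ht
              show (t:ℕ) ∈ Finset.Ioo (τ:ℕ) ((τ:ℕ) + 1 + D τ)
              rw [Finset.mem_Ioo]
              omega
            · intro a _ b _ hab
              exact Fin.ext hab
        _ = D τ := by
            rw [Nat.card_Ioo]
            omega
    calc ∑ t : Fin T, (((SS (t:ℕ) \ A t).card : ℕ) : ℝ)
        = ((∑ t : Fin T, (SS (t:ℕ) \ A t).card : ℕ) : ℝ) := by push_cast; rfl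
      _ ≤ ((∑ t : Fin T, D t : ℕ) : ℝ) := by exact_mod_cast hnat
      _ = ∑ t : Fin T, (D t : ℝ) := by push_cast; rfl
  -- sum the per-step bounds
  have sum1 : (∑ t : Fin T, ∑ n, w t n * l t n)
      ≤ (∑ t : Fin T, (Real.log (Zf (SS (t:ℕ))) - Real.log (Zf (SS ((t:ℕ)+1)))))/η
        + (T:ℝ) * (η*H^2/8)
        + η * (H^2/4) * ∑ t : Fin T, (((SS (t:ℕ) \ A t).card : ℕ) : ℝ) := by
    calc (∑ t : Fin T, ∑ n, w t n * l t n)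
        ≤ ∑ t : Fin T, ((Real.log (Zf (SS (t:ℕ))) - Real.log (Zf (SS ((t:ℕ)+1))))/η
            + η*H^2/8 + η * (H^2/4) * (((SS (t:ℕ) \ A t).card : ℕ) : ℝ)) :=
          Finset.sum_le_sum (fun t _ => step t)
      _ = _ := by
          rw [Finset.sum_add_distrib, Finset.sum_add_distrib, ← Finset.sum_div,
            Finset.sum_const, Finset.card_univ, Fintype.card_fin, ← Finset.mul_sum,
            nsmul_eq_mul]
  -- final combination
  have hnum : (∑ t : Fin T, (Real.log (Zf (SS (t:ℕ))) - Real.log (Zf (SS ((t:ℕ)+1)))))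
      ≤ ((K:ℝ)+1) * (Real.log N + Real.log T) + η * ∑ t : Fin T, l t (ν t) := by
    rw [tel, hZ0]
    have := hZTlow
    have := hPν
    linarith
  have hdiv : (∑ t : Fin T, (Real.log (Zf (SS (t:ℕ))) - Real.log (Zf (SS ((t:ℕ)+1)))))/η
      ≤ ((K:ℝ)+1) * (Real.log N + Real.log T)/η + ∑ t : Fin T, l t (ν t) := by
    calc (∑ t : Fin T, (Real.log (Zf (SS (t:ℕ))) - Real.log (Zf (SS ((t:ℕ)+1)))))/η
        ≤ (((K:ℝ)+1) * (Real.log N + Real.log T) + η * ∑ t : Fin T, l t (ν t))/η :=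
          (div_le_div_iff_of_pos_right hη).mpr hnum
      _ = ((K:ℝ)+1) * (Real.log N + Real.log T)/η + ∑ t : Fin T, l t (ν t) := by
          field_simp
  have hlast : η * (H^2/4) * (∑ t : Fin T, (((SS (t:ℕ) \ A t).card : ℕ) : ℝ))
      ≤ η * H^2/4 * ∑ t : Fin T, (D t : ℝ) := by
    have h1 : η * (H^2/4) * (∑ t : Fin T, (((SS (t:ℕ) \ A t).card : ℕ) : ℝ))
        ≤ η * (H^2/4) * ∑ t : Fin T, (D t : ℝ) :=
      mul_le_mul_of_nonneg_left dsum (by positivity)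
    calc η * (H^2/4) * (∑ t : Fin T, (((SS (t:ℕ) \ A t).card : ℕ) : ℝ))
        ≤ η * (H^2/4) * ∑ t : Fin T, (D t : ℝ) := h1
      _ = η * H^2/4 * ∑ t : Fin T, (D t : ℝ) := by ring
  have hT8 : (T:ℝ) * (η*H^2/8) = η * H^2 * T / 8 := by ring
  linarith [sum1, hdiv, hlast]
end
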